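/- arXiv:1109.2976 — 5 statements merged into one kernel-verified Lean document; each statement's English description precedes it below -/
import Mathlib

section
/- Let G be a finite simple 2-connected graph and let L be a list assignment giving each vertex v of G a finite list L(v) of colors with |L(v)| ≥ deg(v). Then G admits a proper coloring φ with φ(v) ∈ L(v) for every vertex v, unless G is a complete graph or an odd cycle and the lists assigned to all vertices are the same. -/
open SimpleGraph

/-- A graph is 2-connected if it has at least three vertices and deleting any single vertex
leaves it connected. -/
def TwoConnected {V : Type*} [Fintype V] (G : SimpleGraph V) : Prop :=
  3 ≤ Fintype.card V ∧ ∀ v : V, (G.induce ({v}ᶜ : Set V)).Connected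

/-- A graph is an odd cycle if it is connected, every vertex has degree two, and the number
of vertices is odd. -/
def IsOddCycleGraph {V : Type*} [Fintype V] (G : SimpleGraph V) [DecidableRel G.Adj] : Prop :=
  G.Connected ∧ (∀ v : V, G.degree v = 2) ∧ Odd (Fintype.card V)

namespace BERT

variable {V : Type*} {α : Type*} {G : SimpleGraph V}

/-- Reachability by a walk whose support avoids `S`. -/
def ReachOut (G : SimpleGraph V) (S : Set V) (u v : V) : Prop :=
  ∃ w : G.Walk u v, ∀ x ∈ w.support, x ∉ S

lemma ReachOut.mono {S T : Set V} (hST : S ⊆ T) {u v} (h : ReachOut G T u v) :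
    ReachOut G S u v := by
  obtain ⟨w, hw⟩ := h
  exact ⟨w, fun x hx hxS => hw x hx (hST hxS)⟩

lemma ReachOut.refl {S : Set V} {u : V} (hu : u ∉ S) : ReachOut G S u u :=
  ⟨Walk.nil, by simp [hu]⟩

lemma ReachOut.symm {S : Set V} {u v : V} (h : ReachOut G S u v) : ReachOut G S v u := by
  obtain ⟨w, hw⟩ := h
  exact ⟨w.reverse, by simpa using hw⟩

lemma ReachOut.trans {S : Set V} {u v x : V} (h : ReachOut G S u v) (h' : ReachOut G S v x) :
    ReachOut G S u x := by
  obtain ⟨w, hw⟩ := h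
  obtain ⟨w', hw'⟩ := h'
  refine ⟨w.append w', fun y hy => ?_⟩
  rcases (Walk.mem_support_append_iff _ _).mp hy with h | h
  · exact hw y h
  · exact hw' y h

lemma ReachOut.adj {S : Set V} {u v : V} (h : G.Adj u v) (hu : u ∉ S) (hv : v ∉ S) :
    ReachOut G S u v :=
  ⟨h.toWalk, by simp [hu, hv]⟩

lemma ReachOut.not_left {S : Set V} {u v : V} (h : ReachOut G S u v) : u ∉ S := by
  obtain ⟨w, hw⟩ := h; exact hw u w.start_mem_support

lemma ReachOut.not_right {S : Set V} {u v : V} (h : ReachOut G S u v) : v ∉ S := by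
  obtain ⟨w, hw⟩ := h; exact hw v w.end_mem_support

lemma ReachOut.reachable {S : Set V} {u v : V} (h : ReachOut G S u v) : G.Reachable u v := by
  obtain ⟨w, _⟩ := h; exact ⟨w⟩

/-- Transfer connectivity of an induced graph on `Sᶜ` to `ReachOut`. -/
lemma reachOut_of_induce_connected {S : Set V} (h : (G.induce (Sᶜ : Set V)).Connected)
    {u v : V} (hu : u ∉ S) (hv : v ∉ S) : ReachOut G S u v := by
  obtain ⟨w⟩ := h.preconnected ⟨u, hu⟩ ⟨v, hv⟩
  refine ⟨w.map (Embedding.induce (Sᶜ : Set V)).toHom, fun x hx => ?_⟩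
  erw [Walk.support_map, List.mem_map] at hx
  obtain ⟨⟨y, hy⟩, _, rfl⟩ := hx
  exact hy

/-- Crossing lemma: a walk from inside `s` to outside `s` crosses the boundary. -/
lemma exists_crossing {s : Set V} {u v : V} (w : G.Walk u v) (hu : u ∈ s) (hv : v ∉ s) :
    ∃ x y, x ∈ s ∧ y ∉ s ∧ G.Adj x y ∧ x ∈ w.support ∧ y ∈ w.support := by
  induction w with
  | nil => exact absurd hu hv
  | @cons a b c h p ih =>
    by_cases hb : b ∈ s
    · obtain ⟨x, y, h1, h2, h3, h4, h5⟩ := ih hb hv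
      exact ⟨x, y, h1, h2, h3, by simp [h4], by simp [h5]⟩
    · exact ⟨a, b, hu, hb, h, by simp, by simp⟩


/-- Greedy coloring along a list: each vertex has fewer earlier neighbors than colors. -/
lemma greedy [DecidableEq V] [DecidableEq α] [DecidableRel G.Adj] [Nonempty α]
    (L : V → Finset α) (l : List V) (hnd : l.Nodup)
    (hc : ∀ (l₁ l₂ : List V) (x : V), l = l₁ ++ x :: l₂ →
      ((l₁.filter (fun y => decide (G.Adj x y))).length < (L x).card)) :
    ∃ φ : V → α, (∀ v ∈ l, φ v ∈ L v) ∧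
      ∀ u v, u ∈ l → v ∈ l → G.Adj u v → φ u ≠ φ v := by
  induction l using List.reverseRecOn with
  | nil => exact ⟨fun _ => Classical.arbitrary α, by simp, by simp⟩
  | append_singleton l z ih =>
    rw [List.nodup_append] at hnd
    obtain ⟨hndl, -, hdisj⟩ := hnd
    have hxl : z ∉ l := fun hx => hdisj z hx z (by simp) rfl
    obtain ⟨φ, hmem, hprop⟩ := ih hndl (fun l₁ l₂ y hsplit => by
      refine hc l₁ (l₂ ++ [z]) y ?_
      rw [hsplit]; simp)
    have hx : ((l.filter (fun y => decide (G.Adj z y))).length < (L z).card) :=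
      hc l [] z rfl
    set used : Finset α := ((l.filter (fun y => decide (G.Adj z y))).map φ).toFinset with hused
    have husedcard : used.card < (L z).card := by
      calc used.card ≤ ((l.filter (fun y => decide (G.Adj z y))).map φ).length :=
            List.toFinset_card_le _
        _ = (l.filter (fun y => decide (G.Adj z y))).length := List.length_map _
        _ < (L z).card := hx
    have hne : (L z \ used).Nonempty := by
      rw [← Finset.card_pos]
      have := Finset.le_card_sdiff used (L z)
      omega
    obtain ⟨γ, hγ⟩ := hne
    rw [Finset.mem_sdiff] at hγ
    refine ⟨Function.update φ z γ, ?_, ?_⟩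
    · intro v hv
      rcases List.mem_append.mp hv with hv | hv
      · rw [Function.update_of_ne (fun h => hxl (by rw [← h]; exact hv))]
        exact hmem v hv
      · simp only [List.mem_singleton] at hv
        subst hv
        rw [Function.update_self]
        exact hγ.1
    · intro u v hu hv hadj
      have key : ∀ w ∈ l, G.Adj z w → Function.update φ z γ w ≠ γ := by
        intro w hw hadjw
        rw [Function.update_of_ne (fun h => hxl (by rw [← h]; exact hw))]
        intro h
        apply hγ.2
        rw [hused, List.mem_toFinset, List.mem_map]
        exact ⟨w, by rw [List.mem_filter]; exact ⟨hw, by simpa using hadjw⟩, h⟩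
      rcases List.mem_append.mp hu with hu' | hu'
      · rcases List.mem_append.mp hv with hv' | hv'
        · rw [Function.update_of_ne (fun h => hxl (by rw [← h]; exact hu')),
            Function.update_of_ne (fun h => hxl (by rw [← h]; exact hv'))]
          exact hprop u v hu' hv' hadj
        · have hvz : v = z := by simpa using hv'
          rw [hvz, Function.update_self]
          exact fun h => key u hu' (hvz ▸ hadj.symm) h
      · have huz : u = z := by simpa using hu'
        rcases List.mem_append.mp hv with hv' | hv'
        · rw [huz, Function.update_self]
          exact fun h => key v hv' (huz ▸ hadj) h.symm
        · have hvz : v = z := by simpa using hv'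
          rw [huz, hvz] at hadj
          exact absurd hadj (G.loopless.irrefl z)


lemma color_avoiding [Fintype V] [DecidableEq V] [DecidableEq α] [DecidableRel G.Adj]
    [Nonempty α]
    (R : Finset V) (v0 : V) (hv0 : v0 ∉ R)
    (hconn : ∀ x, x ∉ R → ReachOut G ↑R x v0)
    (L' : V → Finset α)
    (hc : ∀ x, x ∉ R → x ≠ v0 → (G.neighborFinset x \ R).card ≤ (L' x).card)
    (hc0 : (G.neighborFinset v0 \ R).card < (L' v0).card) :
    ∃ φ : V → α, (∀ x, x ∉ R → φ x ∈ L' x) ∧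
      ∀ u v, u ∉ R → v ∉ R → G.Adj u v → φ u ≠ φ v := by
  have build : ∀ (k : ℕ) (m : List V), m.Nodup → (∀ x ∈ m, x ∉ R) → v0 ∈ m →
      (∀ (m₁ m₂ : List V) (x : V), m = m₁ ++ x :: m₂ → x ≠ v0 → ∃ y ∈ m₂, G.Adj x y) →
      ((Finset.univ.filter (fun x => x ∉ R)) \ m.toFinset).card ≤ k →
      ∃ m' : List V, m'.Nodup ∧ (∀ x, x ∈ m' ↔ x ∉ R) ∧
        (∀ (m₁ m₂ : List V) (x : V), m' = m₁ ++ x :: m₂ → x ≠ v0 → ∃ y ∈ m₂, G.Adj x y) := by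
    intro k
    induction k with
    | zero =>
      intro m hnd hmem hv0m hsplit hcard
      refine ⟨m, hnd, fun x => ⟨fun h => hmem x h, fun h => ?_⟩, hsplit⟩
      by_contra hxm
      have hx : x ∈ (Finset.univ.filter (fun x => x ∉ R)) \ m.toFinset := by
        simp [h, hxm]
      have := Finset.card_pos.mpr ⟨x, hx⟩
      omega
    | succ k ih =>
      intro m hnd hmem hv0m hsplit hcard
      by_cases hall : ∀ x, x ∉ R → x ∈ m
      · exact ⟨m, hnd, fun x => ⟨fun h => hmem x h, hall x⟩, hsplit⟩
      push_neg at hall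
      obtain ⟨u, huR, hum⟩ := hall
      obtain ⟨w, hw⟩ := hconn u huR
      obtain ⟨x, y, hxs, hys, hadj, hxsup, hysup⟩ :=
        exists_crossing (s := (↑m.toFinset : Set V)ᶜ) w (by simp [hum]) (by simp [hv0m])
      have hxR : x ∉ R := hw x hxsup
      have hxm : x ∉ m := by simpa using hxs
      have hym : y ∈ m := by simpa using hys
      refine ih (x :: m) (by simp [hnd, hxm]) ?_ (by simp [hv0m]) ?_ ?_
      · intro z hz
        rcases List.mem_cons.mp hz with rfl | hz
        · exact hxR
        · exact hmem z hz
      · intro m₁ m₂ z hsp hzv0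
        cases m₁ with
        | nil =>
          simp only [List.nil_append, List.cons.injEq] at hsp
          obtain ⟨rfl, rfl⟩ := hsp
          exact ⟨y, hym, hadj⟩
        | cons a m₁' =>
          simp only [List.cons_append, List.cons.injEq] at hsp
          exact hsplit m₁' m₂ z hsp.2 hzv0
      · have hsub : (Finset.univ.filter (fun x => x ∉ R)) \ (x :: m).toFinset ⊆
            ((Finset.univ.filter (fun x => x ∉ R)) \ m.toFinset).erase x := by
          intro z hz
          simp only [Finset.mem_sdiff, List.toFinset_cons, Finset.mem_insert,
            List.mem_toFinset, Finset.mem_erase, Finset.mem_filter] at hz ⊢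
          push_neg at hz
          exact ⟨hz.2.1, ⟨hz.1, hz.2.2⟩⟩
        have hxin : x ∈ (Finset.univ.filter (fun x => x ∉ R)) \ m.toFinset := by
          simp [hxR, hxm]
        have h1 := Finset.card_le_card hsub
        have h2 := Finset.card_erase_of_mem hxin
        omega
  obtain ⟨m', hnd', hmem', hsplit'⟩ := build
    ((Finset.univ.filter (fun x => x ∉ R)) \ [v0].toFinset).card [v0]
    (by simp) (by simpa using hv0) (by simp) (by
      rintro m₁ m₂ x hsp hx
      exfalso
      cases m₁ with
      | nil => simp only [List.nil_append, List.cons.injEq] at hsp; exact hx hsp.1.symm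
      | cons a m₁' =>
        simp only [List.cons_append, List.cons.injEq] at hsp
        exact absurd hsp.2.symm (by simp)) le_rfl
  obtain ⟨φ, hφmem, hφprop⟩ := greedy (G := G) L' m' hnd' (by
    intro l₁ l₂ x hsp
    have hndsp : (l₁ ++ x :: l₂).Nodup := hsp ▸ hnd'
    rw [List.nodup_append] at hndsp
    obtain ⟨hnd1, hnd2, hdisj⟩ := hndsp
    have hxR : x ∉ R := (hmem' x).mp (by rw [hsp]; simp)
    have hl1R : ∀ z ∈ l₁, z ∉ R := fun z hz => (hmem' z).mp (by rw [hsp]; simp [hz])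
    have hfnd : (l₁.filter (fun y => decide (G.Adj x y))).Nodup := hnd1.filter _
    have hlen : (l₁.filter (fun y => decide (G.Adj x y))).toFinset.card
        = (l₁.filter (fun y => decide (G.Adj x y))).length :=
      List.toFinset_card_of_nodup hfnd
    by_cases hxv : x = v0
    · subst hxv
      have hsub : (l₁.filter (fun y => decide (G.Adj x y))).toFinset ⊆
          G.neighborFinset x \ R := by
        intro z hz
        simp only [List.mem_toFinset, List.mem_filter, decide_eq_true_eq] at hz
        simp [hz.2, hl1R z hz.1]
      have h1 := Finset.card_le_card hsub
      omega
    · obtain ⟨y, hy2, hadjy⟩ := hsplit' l₁ l₂ x hsp hxv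
      have hyR : y ∉ R := (hmem' y).mp (by rw [hsp]; simp [hy2])
      have hynl1 : y ∉ l₁ := fun hy1 => hdisj y hy1 y (by simp [hy2]) rfl
      have hsub : (l₁.filter (fun y => decide (G.Adj x y))).toFinset ⊆
          (G.neighborFinset x \ R).erase y := by
        intro z hz
        simp only [List.mem_toFinset, List.mem_filter, decide_eq_true_eq] at hz
        have : z ≠ y := fun h => hynl1 (h ▸ hz.1)
        simp [this, hz.2, hl1R z hz.1]
      have h1 := Finset.card_le_card hsub
      have h2 := Finset.card_erase_of_mem (a := y) (s := G.neighborFinset x \ R)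
        (by simp [hadjy, hyR])
      have h3 := hc x ((hmem' x).mp (by rw [hsp]; simp)) hxv
      have h4 : y ∈ G.neighborFinset x \ R := by simp [hadjy, hyR]
      have h5 := Finset.card_pos.mpr ⟨y, h4⟩
      omega)
  refine ⟨φ, fun x hx => hφmem x ((hmem' x).mpr hx), fun u v hu hv hadj =>
    hφprop u v ((hmem' u).mpr hu) ((hmem' v).mpr hv) hadj⟩


/-- Walks avoiding a set stay reachable-avoiding to each support vertex. -/
lemma ReachOut.to_support {S : Set V} {u v : V} (h : ReachOut G S u v) {y : V}
    [DecidableEq V] : ∀ (w : G.Walk u v), (∀ x ∈ w.support, x ∉ S) → y ∈ w.support →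
    ReachOut G S u y := by
  intro w hw hy
  exact ⟨w.takeUntil y hy, fun x hx => hw x (Walk.support_takeUntil_subset _ _ hx)⟩

/-- Key avoidance lemma: a walk to `b` avoiding `c`, starting outside a set `A` that is
closed under adjacency except at `b`, `c`, can be upgraded to avoid all of `A`. -/
lemma reachOut_avoid_of_closed {A : Set V} {b c : V}
    (hcl : ∀ p q, p ∈ A → G.Adj p q → q ∉ A → q = b ∨ q = c)
    (hb : b ∉ A) :
    ∀ {x y : V} (w : G.Walk x y), y = b → (∀ z ∈ w.support, z ≠ c) → x ∉ A →
      ReachOut G (A ∪ {c}) x b := by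
  intro x y w
  induction w with
  | nil =>
    rintro rfl hsup hx
    refine ReachOut.refl ?_
    rintro (h | h)
    · exact hx h
    · exact hsup _ (by simp) h
  | @cons a t e h p ih =>
    rintro rfl hsup hx
    have hac : a ≠ c := hsup a (by simp)
    by_cases hab : a = e
    · subst hab
      refine ReachOut.refl ?_
      rintro (h | h)
      · exact hx h
      · exact hac h
    · have htsup : ∀ z ∈ p.support, z ≠ c := fun z hz => hsup z (by simp [hz])
      have htc : t ≠ c := htsup t (by simp)
      have ht : t ∉ A := by
        intro htA
        rcases hcl t a htA h.symm hx with rfl | rfl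
        · exact hab rfl
        · exact hac rfl
      have hIH := ih rfl htsup ht
      refine (ReachOut.adj h ?_ ?_).trans hIH
      · rintro (h | h)
        · exact hx h
        · exact hac h
      · rintro (h | h)
        · exact ht h
        · exact htc h

lemma structural [Fintype V] [DecidableEq V] [DecidableRel G.Adj]
    (hreach1 : ∀ (v x y : V), x ≠ v → y ≠ v → ReachOut G {v} x y)
    {k : ℕ} (hreg : ∀ v, G.degree v = k) (hk : 3 ≤ k)
    {p q : V} (hpq : p ≠ q) (hnadjpq : ¬G.Adj p q) (hwalk : G.Reachable p q) :
    ∃ b c, b ≠ c ∧ ¬G.Adj b c ∧ (∃ a, G.Adj a b ∧ G.Adj a c) ∧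
      ∀ x y, x ∉ ({b, c} : Set V) → y ∉ ({b, c} : Set V) → ReachOut G {b, c} x y := by
  classical
  -- an "eligible" pair exists
  have hstep : ∀ {u v : V} (w : G.Walk u v), u ≠ v → ¬G.Adj u v →
      ∃ b c, b ≠ c ∧ ¬G.Adj b c ∧ (∃ a, G.Adj a b ∧ G.Adj a c) := by
    intro u v w
    induction w with
    | nil => intro h _; exact absurd rfl h
    | @cons a t e h p ih =>
      intro hne hna
      by_cases hte : t = e
      · subst hte; exact absurd h hna
      · by_cases hadj : G.Adj t e
        · exact ⟨a, e, hne, hna, t, h.symm, hadj⟩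
        · exact ih hte hadj
  obtain ⟨w0⟩ := hwalk
  obtain ⟨b0, c0, hb0c0, hnadj0, helig0⟩ := hstep w0 hpq hnadjpq
  by_contra hno
  have hfail : ∀ b c, b ≠ c → ¬G.Adj b c → (∃ a, G.Adj a b ∧ G.Adj a c) →
      ∃ x y, x ∉ ({b, c} : Set V) ∧ y ∉ ({b, c} : Set V) ∧ ¬ReachOut G {b, c} x y := by
    intro b c h1 h2 h3
    by_contra hcontra
    push_neg at hcontra
    exact hno ⟨b, c, h1, h2, h3, fun x y hx hy => hcontra x y hx hy⟩
  have witness : ∀ (b c t : V), t ∉ ({b, c} : Set V) →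
      (∃ x y, x ∉ ({b, c} : Set V) ∧ y ∉ ({b, c} : Set V) ∧ ¬ReachOut G {b, c} x y) →
      ∃ y₀, y₀ ∉ ({b, c} : Set V) ∧ ¬ReachOut G {b, c} y₀ t := by
    rintro b c t ht ⟨x, y, hx, hy, hxy⟩
    by_cases hxt : ReachOut G {b, c} x t
    · by_cases hyt : ReachOut G {b, c} y t
      · exact absurd (hxt.trans hyt.symm) hxy
      · exact ⟨y, hy, hyt⟩
    · exact ⟨x, hx, hxt⟩
  -- the set of triples
  set T : Finset (V × V × V) := Finset.univ.filter (fun t => t.1 ≠ t.2.1 ∧ ¬G.Adj t.1 t.2.1 ∧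
    (∃ a, G.Adj a t.1 ∧ G.Adj a t.2.1) ∧ t.2.2 ∉ ({t.1, t.2.1} : Set V)) with hT
  have hcard3 : 3 ≤ Fintype.card V := by
    have h1 := G.degree_lt_card_verts b0
    have h2 := hreg b0
    omega
  have hy0ex : ∃ y₀, y₀ ∉ ({b0, c0} : Set V) := by
    by_contra hall
    push_neg at hall
    have hsub : (Finset.univ : Finset V) ⊆ {b0, c0} := by
      intro x _
      have := hall x
      simp only [Set.mem_insert_iff, Set.mem_singleton_iff] at this
      simpa using this
    have := Finset.card_le_card hsub
    have h2 : ({b0, c0} : Finset V).card ≤ 2 := Finset.card_insert_le _ _ |>.trans (by simp)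
    rw [Finset.card_univ] at this
    omega
  obtain ⟨yex, hyex⟩ := hy0ex
  have hTne : T.Nonempty := ⟨(b0, c0, yex), by
    rw [hT, Finset.mem_filter]
    exact ⟨Finset.mem_univ _, hb0c0, hnadj0, helig0, hyex⟩⟩
  obtain ⟨⟨b, c, y₀⟩, hmemT, hmin⟩ :=
    T.exists_min_image (fun t => {x | ReachOut G {t.1, t.2.1} t.2.2 x}.ncard) hTne
  rw [hT, Finset.mem_filter] at hmemT
  obtain ⟨-, hbc, hnadjbc, ⟨a0, ha0b, ha0c⟩, hy₀⟩ := hmemT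
  simp only [] at hbc hnadjbc hy₀
  set A : Set V := {x | ReachOut G {b, c} y₀ x} with hA
  have hmin' : ∀ t ∈ T, A.ncard ≤ {x | ReachOut G {t.1, t.2.1} t.2.2 x}.ncard := hmin
  have hbS : b ∈ ({b, c} : Set V) := by simp
  have hcS : c ∈ ({b, c} : Set V) := by simp
  have hAb : b ∉ A := fun h => h.not_right hbS
  have hAc : c ∉ A := fun h => h.not_right hcS
  have hy₀bc : y₀ ∉ ({b, c} : Set V) := hy₀
  have hy₀A : y₀ ∈ A := ReachOut.refl hy₀bc
  have hy₀b : y₀ ≠ b := fun h => hy₀bc (by simp [h])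
  have hy₀c : y₀ ≠ c := fun h => hy₀bc (by simp [h])
  have hclosure : ∀ p' q', p' ∈ A → G.Adj p' q' → q' ∉ A → q' = b ∨ q' = c := by
    intro p' q' hp hadj hq
    by_contra hh
    push_neg at hh
    refine hq (ReachOut.trans hp (ReachOut.adj hadj hp.not_right ?_))
    simp only [Set.mem_insert_iff, Set.mem_singleton_iff]
    push_neg
    exact hh
  have hclosure' : ∀ p' q', p' ∈ A → G.Adj p' q' → q' ∉ A → q' = c ∨ q' = b := by
    intro p' q' h1 h2 h3
    exact (hclosure p' q' h1 h2 h3).symm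
  have hnbr : ∀ v ∈ A, ∀ t, G.Adj v t → t ∈ A ∨ t = b ∨ t = c := by
    intro v hv t hadj
    by_cases htA : t ∈ A
    · exact Or.inl htA
    · exact Or.inr (hclosure v t hv hadj htA)
  have hAfin : A.Finite := Set.toFinite A
  set Af : Finset V := hAfin.toFinset with hAfdef
  have hAfmem : ∀ x, x ∈ Af ↔ x ∈ A := fun x => Set.Finite.mem_toFinset hAfin
  have hncard : A.ncard = Af.card := Set.ncard_eq_toFinset_card A hAfin
  -- |A| ≥ k - 1
  have hcardA1 : k ≤ Af.card + 1 := by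
    have hsub : G.neighborFinset y₀ ⊆ (Af.erase y₀) ∪ {b, c} := by
      intro t ht
      rw [SimpleGraph.mem_neighborFinset] at ht
      rcases hnbr y₀ hy₀A t ht with h | h | h
      · refine Finset.mem_union_left _ (Finset.mem_erase.mpr ⟨ht.ne', (hAfmem t).mpr h⟩)
      · exact Finset.mem_union_right _ (by simp [h])
      · exact Finset.mem_union_right _ (by simp [h])
    have h1 := Finset.card_le_card hsub
    have h2 := Finset.card_union_le (Af.erase y₀) ({b, c} : Finset V)
    have h3 : ({b, c} : Finset V).card ≤ 2 := Finset.card_insert_le _ _ |>.trans (by simp)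
    have h4 := Finset.card_erase_of_mem ((hAfmem y₀).mpr hy₀A)
    have h5 : 0 < Af.card := Finset.card_pos.mpr ⟨y₀, (hAfmem y₀).mpr hy₀A⟩
    have h6 : G.degree y₀ = k := hreg y₀
    rw [← SimpleGraph.card_neighborFinset_eq_degree] at h6
    omega
  -- star lemmas
  have starC : ∀ b' ∈ A, ¬G.Adj b' c → ∀ w', ¬(G.Adj w' b' ∧ G.Adj w' c) := by
    rintro b' hb' hnadj' w' ⟨hw1, hw2⟩
    have hb'c : b' ≠ c := fun h => hAc (h ▸ hb')
    have hbb' : b ≠ b' := fun h => hAb (h ▸ hb')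
    have hbS' : b ∉ ({b', c} : Set V) := by simp [hbb', hbc]
    obtain ⟨y', hy', hy'b⟩ := witness b' c b hbS'
      (hfail b' c hb'c hnadj' ⟨w', hw1, hw2⟩)
    have hYsub : ∀ t, ReachOut G {b', c} y' t → t ∈ A ∧ t ≠ b' := by
      intro t hti
      have htS' : t ∉ ({b', c} : Set V) := hti.not_right
      have htb' : t ≠ b' := fun h => htS' (by simp [h])
      have htc : t ≠ c := fun h => htS' (by simp [h])
      refine ⟨?_, htb'⟩
      by_contra htA
      have hsubS : ({b', c} : Set V) ⊆ A ∪ {c} := by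
        rintro z hz
        rcases hz with rfl | rfl
        · exact Or.inl hb'
        · exact Or.inr rfl
      have hreachb : ReachOut G {b', c} t b := by
        by_cases htb : t = b
        · subst htb; exact ReachOut.refl hbS'
        · obtain ⟨w2, hw2sup⟩ := hreach1 c t b htc hbc
          have h := reachOut_avoid_of_closed hclosure hAb w2 rfl
            (fun z hz he => hw2sup z hz (by simp [he])) htA
          exact h.mono hsubS
      exact hy'b (hti.trans hreachb)
    have hss : {x | ReachOut G {b', c} y' x} ⊂ A := by
      constructor
      · intro t ht; exact (hYsub t ht).1
      · intro hsup2
        exact (hYsub b' (hsup2 hb')).2 rfl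
    have hlt := Set.ncard_lt_ncard hss hAfin
    have hTmem : (b', c, y') ∈ T := by
      rw [hT, Finset.mem_filter]
      exact ⟨Finset.mem_univ _, hb'c, hnadj', ⟨w', hw1, hw2⟩, hy'⟩
    have := hmin' _ hTmem
    simp only [] at this
    omega
  have starB : ∀ c' ∈ A, ¬G.Adj c' b → ∀ w', ¬(G.Adj w' c' ∧ G.Adj w' b) := by
    rintro c' hc' hnadj' w' ⟨hw1, hw2⟩
    have hbc' : b ≠ c' := fun h => hAb (h ▸ hc')
    have hcc' : c ≠ c' := fun h => hAc (h ▸ hc')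
    have hnadj'' : ¬G.Adj b c' := fun h => hnadj' h.symm
    have hcS' : c ∉ ({b, c'} : Set V) := by simp [hbc.symm, hcc']
    obtain ⟨y', hy', hy'c⟩ := witness b c' c hcS'
      (hfail b c' hbc' hnadj'' ⟨w', hw2, hw1⟩)
    have hYsub : ∀ t, ReachOut G {b, c'} y' t → t ∈ A ∧ t ≠ c' := by
      intro t hti
      have htS' : t ∉ ({b, c'} : Set V) := hti.not_right
      have htc' : t ≠ c' := fun h => htS' (by simp [h])
      have htb : t ≠ b := fun h => htS' (by simp [h])
      refine ⟨?_, htc'⟩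
      by_contra htA
      have hsubS : ({b, c'} : Set V) ⊆ A ∪ {b} := by
        rintro z hz
        rcases hz with rfl | rfl
        · exact Or.inr rfl
        · exact Or.inl hc'
      have hreachc : ReachOut G {b, c'} t c := by
        by_cases htc : t = c
        · subst htc; exact ReachOut.refl hcS'
        · obtain ⟨w2, hw2sup⟩ := hreach1 b t c htb hbc.symm
          have h := reachOut_avoid_of_closed hclosure' hAc w2 rfl
            (fun z hz he => hw2sup z hz (by simp [he])) htA
          exact h.mono hsubS
      exact hy'c (hti.trans hreachc)
    have hss : {x | ReachOut G {b, c'} y' x} ⊂ A := by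
      constructor
      · intro t ht; exact (hYsub t ht).1
      · intro hsup2
        exact (hYsub c' (hsup2 hc')).2 rfl
    have hlt := Set.ncard_lt_ncard hss hAfin
    have hTmem : (b, c', y') ∈ T := by
      rw [hT, Finset.mem_filter]
      exact ⟨Finset.mem_univ _, hbc', hnadj'', ⟨w', hw2, hw1⟩, hy'⟩
    have := hmin' _ hTmem
    simp only [] at this
    omega
  -- A ⊆ N(c)
  have hAsubNc : ∀ v ∈ A, G.Adj v c := by
    have hcnbrA : ∃ x₁ ∈ A, G.Adj x₁ c := by
      obtain ⟨w1, hw1⟩ := hreach1 b y₀ c hy₀b hbc.symm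
      obtain ⟨x, t, hxA, htA, hadj, hxsup, htsup⟩ := exists_crossing w1 hy₀A hAc
      have htb : t ≠ b := fun h => hw1 t htsup (by simp [h])
      rcases hnbr x hxA t hadj with h | h | h
      · exact absurd h htA
      · exact absurd h htb
      · exact ⟨x, hxA, h ▸ hadj⟩
    intro v hv
    by_contra hvc
    obtain ⟨x₁, hx₁A, hx₁c⟩ := hcnbrA
    have hr : ReachOut G {b, c} v x₁ := hv.symm.trans hx₁A
    obtain ⟨w2, hw2⟩ := hr
    obtain ⟨x, t, hxs, hts, hadj, hxsup, htsup⟩ :=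
      exists_crossing (s := {z | ¬G.Adj z c}) w2 hvc (not_not.mpr hx₁c)
    have htc : G.Adj t c := not_not.mp hts
    have hxA : x ∈ A := hv.trans ⟨w2.takeUntil x hxsup,
      fun z hz => hw2 z (Walk.support_takeUntil_subset _ _ hz)⟩
    exact starC x hxA hxs t ⟨hadj.symm, htc⟩
  -- A ⊆ N(b)
  have hAsubNb : ∀ v ∈ A, G.Adj v b := by
    have hbnbrA : ∃ x₁ ∈ A, G.Adj x₁ b := by
      obtain ⟨w1, hw1⟩ := hreach1 c y₀ b hy₀c hbc
      obtain ⟨x, t, hxA, htA, hadj, hxsup, htsup⟩ := exists_crossing w1 hy₀A hAb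
      have htc : t ≠ c := fun h => hw1 t htsup (by simp [h])
      rcases hnbr x hxA t hadj with h | h | h
      · exact absurd h htA
      · exact ⟨x, hxA, h ▸ hadj⟩
      · exact absurd h htc
    intro v hv
    by_contra hvb
    obtain ⟨x₁, hx₁A, hx₁b⟩ := hbnbrA
    have hr : ReachOut G {b, c} v x₁ := hv.symm.trans hx₁A
    obtain ⟨w2, hw2⟩ := hr
    obtain ⟨x, t, hxs, hts, hadj, hxsup, htsup⟩ :=
      exists_crossing (s := {z | ¬G.Adj z b}) w2 hvb (not_not.mpr hx₁b)
    have htb : G.Adj t b := not_not.mp hts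
    have hxA : x ∈ A := hv.trans ⟨w2.takeUntil x hxsup,
      fun z hz => hw2 z (Walk.support_takeUntil_subset _ _ hz)⟩
    exact starB x hxA hxs t ⟨hadj.symm, htb⟩
  -- A is a clique
  have hclique : ∀ p' ∈ A, ∀ q' ∈ A, p' ≠ q' → G.Adj p' q' := by
    intro p' hp' q' hq' hp'q'
    by_contra hnadj'
    obtain ⟨x, y, hx, hy, hxy⟩ := hfail p' q' hp'q' hnadj'
      ⟨c, (hAsubNc p' hp').symm, (hAsubNc q' hq').symm⟩
    have hcp' : c ≠ p' := fun h => hAc (h ▸ hp')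
    have hcq' : c ≠ q' := fun h => hAc (h ▸ hq')
    have hbp' : b ≠ p' := fun h => hAb (h ▸ hp')
    have hbq' : b ≠ q' := fun h => hAb (h ▸ hq')
    have hcS3 : c ∉ ({p', q'} : Set V) := by simp [hcp', hcq']
    have hbS3 : b ∉ ({p', q'} : Set V) := by simp [hbp', hbq']
    have hsubS3 : ({p', q'} : Set V) ⊆ A ∪ {b} := by
      rintro z hz
      rcases hz with rfl | rfl
      · exact Or.inl hp'
      · exact Or.inl hq'
    have houtreach : ∀ t, t ∉ A → t ≠ b → t ≠ c → ReachOut G {p', q'} t c := by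
      intro t htA htb htc
      obtain ⟨w2, hw2sup⟩ := hreach1 b t c htb hbc.symm
      have h := reachOut_avoid_of_closed hclosure' hAc w2 rfl
        (fun z hz he => hw2sup z hz (by simp [he])) htA
      exact h.mono hsubS3
    have hreachc : ∀ t, t ∉ ({p', q'} : Set V) → ReachOut G {p', q'} t c := by
      intro t ht
      by_cases htc : t = c
      · subst htc; exact ReachOut.refl hcS3
      by_cases htA : t ∈ A
      · exact ReachOut.adj (hAsubNc t htA) ht hcS3
      by_cases htb : t = b
      · subst htb
        by_cases hbig : ∃ t₂ ∈ A, t₂ ∉ ({p', q'} : Set V) ∧ G.Adj t t₂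
        · obtain ⟨t₂, ht₂A, ht₂S, hadj₂⟩ := hbig
          exact (ReachOut.adj hadj₂ ht ht₂S).trans
            (ReachOut.adj (hAsubNc t₂ ht₂A) ht₂S hcS3)
        · push_neg at hbig
          have ht₀ex : ∃ t₀ ∈ G.neighborFinset t, t₀ ∉ ({p', q'} : Finset V) := by
            by_contra hallnb
            push_neg at hallnb
            have hsubnb : G.neighborFinset t ⊆ {p', q'} := hallnb
            have h1 := Finset.card_le_card hsubnb
            have h2 : ({p', q'} : Finset V).card ≤ 2 :=
              Finset.card_insert_le _ _ |>.trans (by simp)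
            have h3 : G.degree t = k := hreg t
            rw [← SimpleGraph.card_neighborFinset_eq_degree] at h3
            omega
          obtain ⟨t₀, ht₀nb, ht₀S⟩ := ht₀ex
          rw [SimpleGraph.mem_neighborFinset] at ht₀nb
          have ht₀S' : t₀ ∉ ({p', q'} : Set V) := by
            intro h
            apply ht₀S
            rcases h with rfl | rfl
            · simp
            · simp
          have ht₀A : t₀ ∉ A := fun h => hbig t₀ h ht₀S' ht₀nb
          exact (ReachOut.adj ht₀nb ht ht₀S').trans
            (houtreach t₀ ht₀A (fun h => (G.loopless.irrefl t) (h ▸ ht₀nb)) (fun h => hnadjbc (h ▸ ht₀nb)))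
      · exact houtreach t htA htb htc
    exact hxy ((hreachc x hx).trans (hreachc y hy).symm)
  -- counting: k = |A| + 1
  have hNA : ∀ v ∈ A, G.neighborFinset v = (Af.erase v) ∪ {b, c} := by
    intro v hv
    ext t
    rw [SimpleGraph.mem_neighborFinset]
    constructor
    · intro ht
      rcases hnbr v hv t ht with h | h | h
      · exact Finset.mem_union_left _ (Finset.mem_erase.mpr ⟨ht.ne', (hAfmem t).mpr h⟩)
      · exact Finset.mem_union_right _ (by simp [h])
      · exact Finset.mem_union_right _ (by simp [h])
    · intro ht
      rcases Finset.mem_union.mp ht with h | h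
      · rw [Finset.mem_erase, hAfmem] at h
        exact hclique v hv t h.2 (Ne.symm h.1)
      · rcases Finset.mem_insert.mp h with rfl | h
        · exact (hAsubNb v hv)
        · rw [Finset.mem_singleton] at h
          subst h
          exact (hAsubNc v hv)
  have hkA : k = Af.card + 1 := by
    have h0 := hNA y₀ hy₀A
    have h1 : G.degree y₀ = k := hreg y₀
    rw [← SimpleGraph.card_neighborFinset_eq_degree] at h1
    have hdisj : Disjoint (Af.erase y₀) ({b, c} : Finset V) := by
      rw [Finset.disjoint_right]
      intro z hz
      rcases Finset.mem_insert.mp hz with rfl | hz'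
      · intro hzz
        exact hAb ((hAfmem z).mp (Finset.mem_of_mem_erase hzz))
      · rw [Finset.mem_singleton] at hz'
        subst hz'
        intro hzz
        exact hAc ((hAfmem z).mp (Finset.mem_of_mem_erase hzz))
    have hcard2 : ({b, c} : Finset V).card = 2 := by
      rw [Finset.card_insert_of_notMem (by simp [hbc]), Finset.card_singleton]
    have h2 : (((Af.erase y₀)) ∪ ({b, c} : Finset V)).card
        = (Af.erase y₀).card + 2 := by
      rw [Finset.card_union_of_disjoint hdisj, hcard2]
    have h4 := Finset.card_erase_of_mem ((hAfmem y₀).mpr hy₀A)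
    have h5 : 0 < Af.card := Finset.card_pos.mpr ⟨y₀, (hAfmem y₀).mpr hy₀A⟩
    rw [h0, h2, h4] at h1
    omega
  -- the unique extra neighbor of b
  have hNbsub : Af ⊆ G.neighborFinset b := by
    intro v hv
    rw [SimpleGraph.mem_neighborFinset]
    exact (hAsubNb v ((hAfmem v).mp hv)).symm
  have hrex : (G.neighborFinset b \ Af).card = 1 := by
    rw [Finset.card_sdiff_of_subset hNbsub, SimpleGraph.card_neighborFinset_eq_degree, hreg]
    omega
  obtain ⟨r, hr⟩ := Finset.card_eq_one.mp hrex
  have hrmem : r ∈ G.neighborFinset b \ Af := hr ▸ Finset.mem_singleton_self r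
  have hbr : G.Adj b r := by
    have := (Finset.mem_sdiff.mp hrmem).1
    rwa [SimpleGraph.mem_neighborFinset] at this
  have hrA : r ∉ A := fun h => (Finset.mem_sdiff.mp hrmem).2 ((hAfmem r).mpr h)
  have hrc : r ≠ c := fun h => hnadjbc (h ▸ hbr)
  have hrb : r ≠ b := hbr.ne'
  have hNbr : ∀ t, G.Adj b t → t ∈ A ∨ t = r := by
    intro t ht
    by_cases htA : t ∈ A
    · exact Or.inl htA
    · right
      have : t ∈ G.neighborFinset b \ Af := by
        rw [Finset.mem_sdiff, SimpleGraph.mem_neighborFinset]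
        exact ⟨ht, fun h => htA ((hAfmem t).mp h)⟩
      rw [hr, Finset.mem_singleton] at this
      exact this
  -- the final pair (y₀, r)
  have hy₀r : y₀ ≠ r := fun h => hrA (h ▸ hy₀A)
  have hnadjy₀r : ¬G.Adj y₀ r := by
    intro hadj
    rcases hnbr y₀ hy₀A r hadj with h | h | h
    · exact hrA h
    · exact hrb h
    · exact hrc h
  have hby₀ : G.Adj b y₀ := (hAsubNb y₀ hy₀A).symm
  have hbS3 : b ∉ ({y₀, r} : Set V) := by simp [Ne.symm hy₀b, Ne.symm hrb]
  obtain ⟨y₂, hy₂S, hy₂b⟩ := witness y₀ r b hbS3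
    (hfail y₀ r hy₀r hnadjy₀r ⟨b, hby₀, hbr⟩)
  have hy₂y₀ : y₂ ≠ y₀ := fun h => hy₂S (by simp [h])
  have hy₂r : y₂ ≠ r := fun h => hy₂S (by simp [h])
  -- members of A other than y₀, and c, reach b
  obtain ⟨a₂, ha₂Af, ha₂y₀⟩ := Finset.exists_mem_ne (by omega : 1 < Af.card) y₀
  have ha₂A : a₂ ∈ A := (hAfmem a₂).mp ha₂Af
  have ha₂S : a₂ ∉ ({y₀, r} : Set V) := by
    simp only [Set.mem_insert_iff, Set.mem_singleton_iff]
    push_neg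
    exact ⟨ha₂y₀, fun h => hrA (h ▸ ha₂A)⟩
  have hA2b : ∀ t ∈ A, t ≠ y₀ → ReachOut G ({y₀, r} : Set V) t b := by
    intro t htA hty₀
    refine ReachOut.adj (hAsubNb t htA) ?_ hbS3
    simp only [Set.mem_insert_iff, Set.mem_singleton_iff]
    push_neg
    exact ⟨hty₀, fun h => hrA (h ▸ htA)⟩
  have hcS3 : c ∉ ({y₀, r} : Set V) := by simp [Ne.symm hy₀c, Ne.symm hrc]
  have hcb3 : ReachOut G ({y₀, r} : Set V) c b :=
    (ReachOut.adj (hAsubNc a₂ ha₂A).symm hcS3 ha₂S).trans (hA2b a₂ ha₂A ha₂y₀)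
  have hY₂ : ∀ t, ReachOut G ({y₀, r} : Set V) y₂ t → t ∉ A ∧ t ≠ b ∧ t ≠ c := by
    intro t ht
    refine ⟨?_, ?_, ?_⟩
    · intro htA
      have hty₀ : t ≠ y₀ := fun h => ht.not_right (by simp [h])
      exact hy₂b (ht.trans (hA2b t htA hty₀))
    · rintro rfl
      exact hy₂b ht
    · rintro rfl
      exact hy₂b (ht.trans hcb3)
  obtain ⟨w₃, hw₃⟩ := hreach1 r y₂ b hy₂r (Ne.symm hrb)
  have hy₂self : y₂ ∈ {x | ReachOut G ({y₀, r} : Set V) y₂ x} := ReachOut.refl hy₂S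
  have hbout : b ∉ {x | ReachOut G ({y₀, r} : Set V) y₂ x} := hy₂b
  obtain ⟨x, t, hxs, hts, hadj, hxsup, htsup⟩ := exists_crossing w₃ hy₂self hbout
  have htr : t ≠ r := fun h => hw₃ t htsup (by simp [h])
  have hty₀ : t ≠ y₀ := by
    rintro rfl
    have hx' := hY₂ x hxs
    have hxN : x ∈ G.neighborFinset t := by
      rw [SimpleGraph.mem_neighborFinset]
      exact hadj.symm
    rw [hNA t hy₀A] at hxN
    rcases Finset.mem_union.mp hxN with h | h
    · exact hx'.1 ((hAfmem x).mp (Finset.mem_of_mem_erase h))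
    · rcases Finset.mem_insert.mp h with rfl | h
      · exact hx'.2.1 rfl
      · rw [Finset.mem_singleton] at h
        exact hx'.2.2 h
  have htS : t ∉ ({y₀, r} : Set V) := by
    simp only [Set.mem_insert_iff, Set.mem_singleton_iff]
    push_neg
    exact ⟨hty₀, htr⟩
  exact hts (hxs.trans (ReachOut.adj hadj hxs.not_right htS))


lemma stepdown {W' : Type*} {H : SimpleGraph W'} (hH : H.Connected) {b x : W'} {d : ℕ}
    (h : H.dist b x = d + 1) : ∃ x', H.Adj x' x ∧ H.dist b x' = d := by
  obtain ⟨q, hq⟩ := (hH b x).exists_walk_length_eq_dist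
  have hlen : q.length = d + 1 := by rw [hq, h]
  have hle : ∀ i, H.dist b (q.getVert i) ≤ i := by
    intro i
    induction i with
    | zero => simp [Walk.getVert_zero, SimpleGraph.dist_self]
    | succ i ih =>
      by_cases hi : i < q.length
      · have hadj := q.adj_getVert_succ hi
        have h1 : H.dist (q.getVert i) (q.getVert (i + 1)) ≤ 1 := by
          simpa using SimpleGraph.dist_le hadj.toWalk
        have h2 := hH.dist_triangle (u := b) (v := q.getVert i) (w := q.getVert (i + 1))
        omega
      · push_neg at hi
        have : q.getVert (i + 1) = x := q.getVert_of_length_le (by omega)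
        have hx : q.getVert i = x := q.getVert_of_length_le hi
        rw [this, ← hx]
        omega
  have hadj : H.Adj (q.getVert d) x := by
    have := q.adj_getVert_succ (by omega : d < q.length)
    rwa [show q.getVert (d + 1) = x by rw [← hlen, Walk.getVert_length]] at this
  refine ⟨q.getVert d, hadj, le_antisymm (hle d) ?_⟩
  have h2 := hH.dist_triangle (u := b) (v := q.getVert d) (w := x)
  have h1 : H.dist (q.getVert d) x ≤ 1 := by
    simpa using SimpleGraph.dist_le hadj.toWalk
  omega

lemma k2_coloring {α : Type*} [Fintype V] [DecidableEq V] [DecidableRel G.Adj]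
    (hreg : ∀ v, G.degree v = 2)
    (heven : Even (Fintype.card V)) (hcard3 : 3 ≤ Fintype.card V)
    (v0 : V) (hind : (G.induce ({v0}ᶜ : Set V)).Connected)
    (L0 : Finset α) (hL0 : L0.card = 2) :
    ∃ φ : V → α, (∀ v, φ v ∈ L0) ∧ ∀ u v, G.Adj u v → φ u ≠ φ v := by
  classical
  obtain ⟨γ, hγ, δ, hδ, hγδ⟩ := Finset.one_lt_card.mp (by omega : 1 < L0.card)
  -- two neighbors of v0
  obtain ⟨b, c, hbc, hNv0⟩ := Finset.card_eq_two.mp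
    (by rw [SimpleGraph.card_neighborFinset_eq_degree, hreg] : (G.neighborFinset v0).card = 2)
  have hbadj : G.Adj v0 b := by
    rw [← SimpleGraph.mem_neighborFinset, hNv0]; simp
  have hcadj : G.Adj v0 c := by
    rw [← SimpleGraph.mem_neighborFinset, hNv0]; simp
  set W := ({v0}ᶜ : Set V) with hW
  set H := G.induce W with hH
  have hmemW : ∀ x : V, x ≠ v0 → x ∈ W := fun x hx => by simp [hW, hx]
  have hHadj : ∀ (x y : W), H.Adj x y ↔ G.Adj x.val y.val := by
    intro x y; exact Iff.rfl
  set bh : W := ⟨b, hmemW b hbadj.ne'⟩ with hbh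
  set ch : W := ⟨c, hmemW c hcadj.ne'⟩ with hch
  -- at most two neighbors in H
  have f1 : ∀ (x t1 t2 t3 : W), H.Adj x t1 → H.Adj x t2 → H.Adj x t3 →
      t1 = t2 ∨ t1 = t3 ∨ t2 = t3 := by
    intro x t1 t2 t3 h1 h2 h3
    by_contra hcon
    push_neg at hcon
    obtain ⟨h12, h13, h23⟩ := hcon
    have hv12 : t1.val ≠ t2.val := fun h => h12 (Subtype.ext h)
    have hv13 : t1.val ≠ t3.val := fun h => h13 (Subtype.ext h)
    have hv23 : t2.val ≠ t3.val := fun h => h23 (Subtype.ext h)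
    have hsub : ({t1.val, t2.val, t3.val} : Finset V) ⊆ G.neighborFinset x.val := by
      intro z hz
      rw [SimpleGraph.mem_neighborFinset]
      rcases Finset.mem_insert.mp hz with rfl | hz
      · exact (hHadj x t1).mp h1
      rcases Finset.mem_insert.mp hz with rfl | hz
      · exact (hHadj x t2).mp h2
      rw [Finset.mem_singleton] at hz
      subst hz
      exact (hHadj x t3).mp h3
    have hc3 : ({t1.val, t2.val, t3.val} : Finset V).card = 3 := by
      rw [Finset.card_insert_of_notMem (by simp [hv12, hv13]),
        Finset.card_insert_of_notMem (by simp [hv23]), Finset.card_singleton]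
    have := Finset.card_le_card hsub
    rw [hc3, SimpleGraph.card_neighborFinset_eq_degree, hreg] at this
    omega
  -- vertices adjacent to v0 have at most one neighbor in H
  have f2 : ∀ (x : W), G.Adj v0 x.val → ∀ t1 t2 : W, H.Adj x t1 → H.Adj x t2 → t1 = t2 := by
    intro x hx t1 t2 h1 h2
    by_contra h12
    have hv12 : t1.val ≠ t2.val := fun h => h12 (Subtype.ext h)
    have hv01 : v0 ≠ t1.val := fun h => t1.2 (by simp [← h])
    have hv02 : v0 ≠ t2.val := fun h => t2.2 (by simp [← h])
    have hsub : ({v0, t1.val, t2.val} : Finset V) ⊆ G.neighborFinset x.val := by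
      intro z hz
      rw [SimpleGraph.mem_neighborFinset]
      rcases Finset.mem_insert.mp hz with rfl | hz
      · exact hx.symm
      rcases Finset.mem_insert.mp hz with rfl | hz
      · exact (hHadj x t1).mp h1
      rw [Finset.mem_singleton] at hz
      subst hz
      exact (hHadj x t2).mp h2
    have hc3 : ({v0, t1.val, t2.val} : Finset V).card = 3 := by
      rw [Finset.card_insert_of_notMem (by simp [hv01, hv02]),
        Finset.card_insert_of_notMem (by simp [hv12]), Finset.card_singleton]
    have := Finset.card_le_card hsub
    rw [hc3, SimpleGraph.card_neighborFinset_eq_degree, hreg] at this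
    omega
  -- levels are singletons
  have hsingleton : ∀ d : ℕ, ∀ x y : W, H.dist bh x = d → H.dist bh y = d → x = y := by
    intro d
    induction d using Nat.strong_induction_on with
    | _ d ih =>
      intro x y hx hy
      match d, hx, hy with
      | 0, hx, hy =>
        have hx' : bh = x := (hind.dist_eq_zero_iff (u := bh) (v := x)).mp hx
        have hy' : bh = y := (hind.dist_eq_zero_iff (u := bh) (v := y)).mp hy
        exact hx'.symm.trans hy'
      | (d + 1), hx, hy =>
        obtain ⟨x', hx'adj, hx'd⟩ := stepdown hind hx
        obtain ⟨y', hy'adj, hy'd⟩ := stepdown hind hy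
        have hxy' : x' = y' := ih d (by omega) x' y' hx'd hy'd
        subst hxy'
        match d, hx'd with
        | 0, hx'd =>
          have hbx' : bh = x' := (hind.dist_eq_zero_iff (u := bh) (v := x')).mp hx'd
          rw [← hbx'] at hx'adj hy'adj
          exact f2 bh hbadj x y hx'adj hy'adj
        | (e + 1), hx'd =>
          obtain ⟨z', hz'adj, hz'd⟩ := stepdown hind hx'd
          have hxz : x ≠ z' := by
            intro h
            rw [h] at hx
            omega
          have hyz : y ≠ z' := by
            intro h
            rw [h] at hy
            omega
          rcases f1 x' x y z' hx'adj hy'adj hz'adj.symm with h | h | h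
          · exact h
          · exact absurd h hxz
          · exact absurd h hyz
  -- the maximum distance
  have hWne : Nonempty W := ⟨bh⟩
  haveI : Fintype W := (Set.toFinite W).fintype
  set S : Finset ℕ := Finset.univ.image (fun x : W => H.dist bh x) with hS
  have hSne : S.Nonempty := ⟨H.dist bh bh, by rw [hS]; exact Finset.mem_image_of_mem _ (Finset.mem_univ bh)⟩
  set M : ℕ := S.max' hSne with hM
  have hleM : ∀ x : W, H.dist bh x ≤ M :=
    fun x => S.le_max' _ (by rw [hS]; exact Finset.mem_image_of_mem _ (Finset.mem_univ x))
  have hattain : ∃ xm : W, H.dist bh xm = M := by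
    have h1 := S.max'_mem hSne
    rw [← hM] at h1
    rw [hS] at h1
    rw [Finset.mem_image] at h1
    obtain ⟨xm, -, hxm⟩ := h1
    exact ⟨xm, hxm⟩
  have exists_level : ∀ d, d ≤ M → ∃ y : W, H.dist bh y = d := by
    have aux : ∀ j, j ≤ M → ∃ y : W, H.dist bh y = M - j := by
      intro j
      induction j with
      | zero =>
        intro _
        obtain ⟨xm, hxm⟩ := hattain
        exact ⟨xm, by simpa using hxm⟩
      | succ j ih =>
        intro hj
        obtain ⟨y, hy⟩ := ih (by omega)
        have heq : M - j = (M - (j + 1)) + 1 := by omega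
        rw [heq] at hy
        obtain ⟨y', hy'adj, hy'd⟩ := stepdown hind hy
        exact ⟨y', hy'd⟩
    intro d hd
    obtain ⟨y, hy⟩ := aux (M - d) (by omega)
    exact ⟨y, by rwa [show M - (M - d) = d by omega] at hy⟩
  -- counting
  have hcardW : Fintype.card W = M + 1 := by
    apply le_antisymm
    · have hinj : Function.Injective (fun x : W => (⟨H.dist bh x, by
          have := hleM x; omega⟩ : Fin (M + 1))) := by
        intro x y hxy
        simp only [Fin.mk.injEq] at hxy
        exact hsingleton _ x y hxy rfl
      simpa using Fintype.card_le_of_injective _ hinj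
    · have hlev : ∀ d : Fin (M + 1), ∃ y : W, H.dist bh y = d.val :=
        fun d => exists_level d.val (by omega)
      choose g hg using hlev
      have hinj : Function.Injective g := by
        intro d e hde
        apply Fin.ext
        rw [← hg d, ← hg e, hde]
      simpa using Fintype.card_le_of_injective _ hinj
  have hcardW' : Fintype.card W = Fintype.card V - 1 := by
    have h1 : Fintype.card W = Fintype.card {x : V // ¬(x = v0)} :=
      Fintype.card_congr (Equiv.subtypeEquivRight (by intro x; rw [hW]; simp))
    rw [h1, Fintype.card_subtype_compl, Fintype.card_subtype_eq]
  have hMeven : Even M := by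
    rw [Nat.even_iff] at heven ⊢
    omega
  -- c is at distance M
  have hbhch : bh ≠ ch := fun h => hbc (congrArg Subtype.val h)
  have hdistc : H.dist bh ch = M := by
    by_contra hDM
    have hD := hleM ch
    have hDlt : H.dist bh ch < M := lt_of_le_of_ne hD hDM
    set D := H.dist bh ch with hDdef
    have hD1 : 1 ≤ D := by
      rcases Nat.eq_zero_or_pos D with h0 | h1
      · exfalso
        have hd0 : H.dist bh ch = 0 := by rw [← hDdef]; omega
        exact hbhch ((hind.dist_eq_zero_iff (u := bh) (v := ch)).mp hd0)
      · exact h1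
    obtain ⟨z, hz⟩ := exists_level (D + 1) (by omega)
    obtain ⟨z', hz'adj, hz'd⟩ := stepdown hind hz
    have hzc : z' = ch := hsingleton D z' ch hz'd rfl
    rw [hzc] at hz'adj
    obtain ⟨e, he⟩ : ∃ e, D = e + 1 := ⟨D - 1, by omega⟩
    obtain ⟨z'', hz''adj, hz''d⟩ := stepdown hind (hDdef.symm.trans he)
    have : z = z'' := f2 ch hcadj z z'' hz'adj hz''adj.symm
    rw [this] at hz
    rw [hz''d] at hz
    omega
  -- the coloring
  refine ⟨fun v => if h : v = v0 then δ else
    (if Even (H.dist bh ⟨v, hmemW v h⟩) then γ else δ), ?_, ?_⟩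
  · intro v
    dsimp only
    by_cases h : v = v0
    · simp [h, hδ]
    · rw [dif_neg h]
      by_cases h2 : Even (H.dist bh ⟨v, hmemW v h⟩)
      · simp [h2, hγ]
      · simp [h2, hδ]
  · intro u w hadj
    dsimp only
    have hkey : ∀ z : V, G.Adj v0 z → ∀ (hz : ¬ z = v0),
        Even (H.dist bh ⟨z, hmemW z hz⟩) := by
      intro z hzadj hz
      have : z ∈ G.neighborFinset v0 := by rwa [SimpleGraph.mem_neighborFinset]
      rw [hNv0] at this
      rcases Finset.mem_insert.mp this with rfl | hzz
      · have : (⟨z, hmemW z hz⟩ : W) = bh := Subtype.ext rfl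
        rw [this]
        simp [SimpleGraph.dist_self]
      · rw [Finset.mem_singleton] at hzz
        subst hzz
        have : (⟨z, hmemW z hz⟩ : W) = ch := Subtype.ext rfl
        rw [this, hdistc]
        exact hMeven
    by_cases hu : u = v0
    · have hw : ¬ w = v0 := by
        intro h
        rw [hu, h] at hadj
        exact G.loopless.irrefl v0 hadj
      rw [dif_pos hu, dif_neg hw, if_pos (hkey w (hu ▸ hadj) hw)]
      exact Ne.symm hγδ
    · by_cases hw : w = v0
      · rw [dif_pos hw, dif_neg hu, if_pos (hkey u (hw ▸ hadj.symm) hu)]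
        exact hγδ
      · rw [dif_neg hu, dif_neg hw]
        have hHadj' : H.Adj ⟨u, hmemW u hu⟩ ⟨w, hmemW w hw⟩ := hadj
        set du := H.dist bh ⟨u, hmemW u hu⟩ with hdu
        set dw := H.dist bh ⟨w, hmemW w hw⟩ with hdw
        have hne' : du ≠ dw := by
          intro h
          have := hsingleton dw ⟨u, hmemW u hu⟩ ⟨w, hmemW w hw⟩ (by rw [← h]) rfl
          rw [Subtype.mk.injEq] at this
          exact G.loopless.irrefl u (this ▸ hadj)
        have h1 : H.dist ⟨u, hmemW u hu⟩ ⟨w, hmemW w hw⟩ ≤ 1 := by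
          simpa using SimpleGraph.dist_le hHadj'.toWalk
        have h2 := hind.dist_triangle (u := bh) (v := ⟨u, hmemW u hu⟩) (w := ⟨w, hmemW w hw⟩)
        have h3 := hind.dist_triangle (u := bh) (v := ⟨w, hmemW w hw⟩) (w := ⟨u, hmemW u hu⟩)
        have h4 : H.dist ⟨w, hmemW w hw⟩ ⟨u, hmemW u hu⟩ ≤ 1 := by
          simpa using SimpleGraph.dist_le hHadj'.symm.toWalk
        have hpar : Even du ↔ ¬ Even dw := by
          rw [Nat.even_iff, Nat.even_iff]
          omega
        by_cases hdueven : Even du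
        · rw [if_pos hdueven, if_neg (hpar.mp hdueven)]
          exact hγδ
        · rw [if_neg hdueven, if_pos (not_not.mp (fun h => hdueven (hpar.mpr h)))]
          exact Ne.symm hγδ


end BERT

/-- Let `G` be a finite simple 2-connected graph and `L` a list assignment with
`|L(v)| ≥ deg(v)` for every vertex `v`.  Then `G` admits a proper coloring from the lists,
unless `G` is a complete graph or an odd cycle and all vertices are assigned the same list. -/
theorem list_coloring_of_twoConnected {V α : Type*} [Fintype V]
    (G : SimpleGraph V) [DecidableRel G.Adj]
    (h2conn : TwoConnected G)
    (L : V → Finset α) (hL : ∀ v : V, G.degree v ≤ (L v).card) :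
    (∃ φ : V → α, (∀ v : V, φ v ∈ L v) ∧ ∀ ⦃u v : V⦄, G.Adj u v → φ u ≠ φ v) ∨
      ((G = ⊤ ∨ IsOddCycleGraph G) ∧ ∀ u v : V, L u = L v) := by
  classical
  obtain ⟨hcard3, hind⟩ := h2conn
  by_cases hP : ((G = ⊤ ∨ IsOddCycleGraph G) ∧ ∀ u v : V, L u = L v)
  · exact Or.inr hP
  left
  have hV : Nonempty V := by
    rw [← Fintype.card_pos_iff]; omega
  have hreach1 : ∀ (v x y : V), x ≠ v → y ≠ v → BERT.ReachOut G {v} x y := by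
    intro v x y hx hy
    exact BERT.reachOut_of_induce_connected (hind v) (by simp [hx]) (by simp [hy])
  have hthird : ∀ a b : V, ∃ z, z ≠ a ∧ z ≠ b := by
    intro a b
    by_contra hcon
    push_neg at hcon
    have hsub : (Finset.univ : Finset V) ⊆ {a, b} := by
      intro z _
      rcases Classical.em (z = a) with h | h
      · simp [h]
      · simp [hcon z h]
    have h1 := Finset.card_le_card hsub
    have h2 : ({a, b} : Finset V).card ≤ 2 := Finset.card_insert_le _ _ |>.trans (by simp)
    rw [Finset.card_univ] at h1
    omega
  have hconn : G.Connected := by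
    rw [connected_iff]
    refine ⟨fun x y => ?_, hV⟩
    obtain ⟨z, hzx, hzy⟩ := hthird x y
    exact (hreach1 z x y (Ne.symm hzx) (Ne.symm hzy)).reachable
  have hdeg2 : ∀ u : V, 2 ≤ G.degree u := by
    intro u
    obtain ⟨x, hxu, -⟩ := hthird u u
    have hne : ∃ w1, G.Adj u w1 := by
      obtain ⟨w⟩ := hconn x u
      obtain ⟨_, bb, -, hbb, hadj, -, -⟩ :=
        BERT.exists_crossing (s := {z | z ≠ u}) w hxu (by simp)
      have : bb = u := not_not.mp hbb
      exact ⟨_, (this ▸ hadj).symm⟩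
    obtain ⟨w1, hw1⟩ := hne
    obtain ⟨x2, hx2u, hx2w⟩ := hthird u w1
    obtain ⟨w, hw⟩ := hreach1 w1 x2 u hx2w (fun h => G.loopless.irrefl u (h ▸ hw1))
    obtain ⟨aa, bb, haa, hbb, hadj, haasup, -⟩ :=
      BERT.exists_crossing (s := {z | z ≠ u}) w hx2u (by simp)
    have hbbu : bb = u := not_not.mp hbb
    have haaw1 : aa ≠ w1 := fun h => hw aa haasup (by simp [h])
    have hsub : ({w1, aa} : Finset V) ⊆ G.neighborFinset u := by
      intro z hz
      rw [SimpleGraph.mem_neighborFinset]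
      rcases Finset.mem_insert.mp hz with rfl | hz
      · exact hw1
      · rw [Finset.mem_singleton] at hz
        subst hz
        exact (hbbu ▸ hadj).symm
    have h1 := Finset.card_le_card hsub
    have h2 : ({w1, aa} : Finset V).card = 2 := by
      rw [Finset.card_insert_of_notMem (by simp [Ne.symm haaw1]), Finset.card_singleton]
    rw [h2, SimpleGraph.card_neighborFinset_eq_degree] at h1
    exact h1
  have hNα : Nonempty α := by
    obtain ⟨v⟩ := hV
    have h1 := hL v
    have h2 := hdeg2 v
    have : 0 < (L v).card := by omega
    obtain ⟨γ, -⟩ := Finset.card_pos.mp this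
    exact ⟨γ⟩
  -- Case 1 : some vertex has slack
  by_cases hstrict : ∃ v0, G.degree v0 < (L v0).card
  · obtain ⟨v0, hv0⟩ := hstrict
    have hconn0 : ∀ x, x ∉ (∅ : Finset V) → BERT.ReachOut G ↑(∅ : Finset V) x v0 := by
      intro x _
      obtain ⟨w⟩ := hconn x v0
      exact ⟨w, by simp⟩
    obtain ⟨φ, hmem, hprop⟩ := BERT.color_avoiding (∅ : Finset V) v0 (by simp) hconn0 L
      (fun x _ _ => by
        simpa [← SimpleGraph.card_neighborFinset_eq_degree] using hL x)
      (by simpa [← SimpleGraph.card_neighborFinset_eq_degree] using hv0)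
    exact ⟨φ, fun v => hmem v (by simp), fun u v h => hprop u v (by simp) (by simp) h⟩
  push_neg at hstrict
  have hdegL : ∀ v, (L v).card = G.degree v := fun v => le_antisymm (hstrict v) (hL v)
  by_cases hLeq : ∀ u v : V, L u = L v
  · -- lists all equal : the regular case
    have hPne : ¬(G = ⊤ ∨ IsOddCycleGraph G) := fun h => hP ⟨h, hLeq⟩
    push_neg at hPne
    obtain ⟨hnotTop, hnotOdd⟩ := hPne
    obtain ⟨varb⟩ := hV
    set L0 : Finset α := L varb with hL0def
    have hLall : ∀ v, L v = L0 := fun v => hLeq v varb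
    set k : ℕ := L0.card with hkdef
    have hreg : ∀ v, G.degree v = k := by
      intro v
      rw [← hdegL v, hLall v]
    have hk2 : 2 ≤ k := by
      have := hdeg2 varb
      rw [hreg varb] at this
      exact this
    by_cases hkk : k = 2
    · -- even cycle case
      have heven : Even (Fintype.card V) := by
        rw [← Nat.not_odd_iff_even]
        intro hodd
        exact hnotOdd ⟨hconn, fun v => by rw [hreg v, hkk], hodd⟩
      obtain ⟨φ, hmem, hprop⟩ := BERT.k2_coloring
        (fun v => by rw [hreg v, hkk]) heven hcard3 varb (hind varb) L0 (by omega)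
      exact ⟨φ, fun v => (hLall v).symm ▸ hmem v, fun u v h => hprop u v h⟩
    · have hk3 : 3 ≤ k := by omega
      have hpqex : ∃ p q : V, p ≠ q ∧ ¬G.Adj p q := by
        by_contra hcon
        push_neg at hcon
        apply hnotTop
        ext x y
        simp only [SimpleGraph.top_adj]
        exact ⟨fun h => h.ne, fun h => hcon x y h⟩
      obtain ⟨p, q, hpq, hnadjpq⟩ := hpqex
      obtain ⟨b, c, hbc, hnadjbc, ⟨a, hab, hac⟩, hconnbc⟩ :=
        BERT.structural hreach1 hreg hk3 hpq hnadjpq (hconn p q)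
      obtain ⟨γ, hγ⟩ := Finset.card_pos.mp (by omega : 0 < L0.card)
      set L' : V → Finset α := fun w =>
        if G.Adj w b ∨ G.Adj w c then L0.erase γ else L0 with hL'def
      have hcardL' : ∀ w, k - 1 ≤ (L' w).card ∧ (L' w).card ≤ k := by
        intro w
        by_cases h : G.Adj w b ∨ G.Adj w c
        · simp only [hL'def, if_pos h, Finset.card_erase_of_mem hγ]
          omega
        · simp only [hL'def, if_neg h]
          omega
      have hanb : a ≠ b := hab.ne
      have hanc : a ≠ c := hac.ne
      have haR : a ∉ ({b, c} : Finset V) := by simp [hanb, hanc]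
      have hcoe : (↑({b, c} : Finset V) : Set V) = ({b, c} : Set V) := by simp
      have hRconn : ∀ x, x ∉ ({b, c} : Finset V) → BERT.ReachOut G ↑({b, c} : Finset V) x a := by
        intro x hx
        rw [hcoe]
        refine hconnbc x a ?_ ?_
        · intro h
          apply hx
          rcases h with rfl | h
          · simp
          · have : x = c := h
            simp [this]
        · simp [hanb, hanc]
      have hcA : ∀ x, x ∉ ({b, c} : Finset V) → x ≠ a →
          (G.neighborFinset x \ ({b, c} : Finset V)).card ≤ (L' x).card := by
        intro x hxR hxa
        have h1 : (G.neighborFinset x \ ({b, c} : Finset V)).card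
            + (G.neighborFinset x ∩ ({b, c} : Finset V)).card = k := by
          rw [Finset.card_sdiff_add_card_inter, SimpleGraph.card_neighborFinset_eq_degree,
            hreg]
        by_cases h : G.Adj x b ∨ G.Adj x c
        · have hbin : (G.neighborFinset x ∩ ({b, c} : Finset V)).Nonempty := by
            rcases h with h | h
            · exact ⟨b, by simp [h]⟩
            · exact ⟨c, by simp [h]⟩
          have h2 := Finset.card_pos.mpr hbin
          have h3 := (hcardL' x).1
          omega
        · have h4 : (L' x).card = k := by
            simp only [hL'def]
            rw [if_neg h]
          omega
      have hc0A : (G.neighborFinset a \ ({b, c} : Finset V)).card < (L' a).card := by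
        have h1 : (G.neighborFinset a \ ({b, c} : Finset V)).card
            + (G.neighborFinset a ∩ ({b, c} : Finset V)).card = k := by
          rw [Finset.card_sdiff_add_card_inter, SimpleGraph.card_neighborFinset_eq_degree,
            hreg]
        have hsub2 : ({b, c} : Finset V) ⊆ G.neighborFinset a ∩ ({b, c} : Finset V) := by
          intro z hz
          rw [Finset.mem_inter]
          refine ⟨?_, hz⟩
          rw [SimpleGraph.mem_neighborFinset]
          rcases Finset.mem_insert.mp hz with rfl | hz
          · exact hab
          · rw [Finset.mem_singleton] at hz
            subst hz
            exact hac
        have h2 := Finset.card_le_card hsub2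
        have h3 : ({b, c} : Finset V).card = 2 := by
          rw [Finset.card_insert_of_notMem (by simp [hbc]), Finset.card_singleton]
        have h4 : (L' a).card = k - 1 := by
          simp only [hL'def]
          rw [if_pos (Or.inl hab), Finset.card_erase_of_mem hγ]
        omega
      obtain ⟨φ, hmem, hprop⟩ := BERT.color_avoiding ({b, c} : Finset V) a haR hRconn L' hcA hc0A
      refine ⟨fun x => if x = b ∨ x = c then γ else φ x, ?_, ?_⟩
      · intro v
        dsimp only
        rw [hLall v]
        by_cases h : v = b ∨ v = c
        · rw [if_pos h]; exact hγ
        · rw [if_neg h]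
          have := hmem v (by
            intro hmem'
            apply h
            rcases Finset.mem_insert.mp hmem' with h' | h'
            · exact Or.inl h'
            · exact Or.inr (Finset.mem_singleton.mp h'))
          simp only [hL'def] at this
          by_cases h2 : G.Adj v b ∨ G.Adj v c
          · rw [if_pos h2] at this
            exact Finset.mem_of_mem_erase this
          · rwa [if_neg h2] at this
      · intro u v hadj
        dsimp only
        have hmem2 : ∀ z, ¬(z = b ∨ z = c) → z ∉ ({b, c} : Finset V) := by
          intro z hz hzz
          apply hz
          rcases Finset.mem_insert.mp hzz with h' | h'
          · exact Or.inl h'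
          · exact Or.inr (Finset.mem_singleton.mp h')
        have hner : ∀ z, (G.Adj z b ∨ G.Adj z c) → ¬(z = b ∨ z = c) → φ z ≠ γ := by
          intro z hzadj hz
          have := hmem z (hmem2 z hz)
          simp only [hL'def] at this
          rw [if_pos hzadj] at this
          exact Finset.ne_of_mem_erase this
        by_cases hu : u = b ∨ u = c
        · rw [if_pos hu]
          by_cases hv : v = b ∨ v = c
          · exfalso
            rcases hu with rfl | rfl <;> rcases hv with rfl | rfl
            · exact G.loopless.irrefl _ hadj
            · exact hnadjbc hadj
            · exact hnadjbc hadj.symm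
            · exact G.loopless.irrefl _ hadj
          · rw [if_neg hv]
            have : G.Adj v b ∨ G.Adj v c := by
              rcases hu with rfl | rfl
              · exact Or.inl hadj.symm
              · exact Or.inr hadj.symm
            exact (hner v this hv).symm
        · rw [if_neg hu]
          by_cases hv : v = b ∨ v = c
          · rw [if_pos hv]
            have : G.Adj u b ∨ G.Adj u c := by
              rcases hv with rfl | rfl
              · exact Or.inl hadj
              · exact Or.inr hadj
            exact hner u this hu
          · rw [if_neg hv]
            exact hprop u v (hmem2 u hu) (hmem2 v hv) hadj
  · -- Case A : two adjacent vertices with different lists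
    have hadjne : ∃ u v, G.Adj u v ∧ L u ≠ L v := by
      by_contra hcon
      push_neg at hcon
      have hwalkconst : ∀ {x y : V} (w : G.Walk x y), L x = L y := by
        intro x y w
        induction w with
        | nil => rfl
        | cons h p ih => exact (hcon _ _ h).trans ih
      push_neg at hLeq
      obtain ⟨u, v, huv⟩ := hLeq
      obtain ⟨w⟩ := hconn u v
      exact huv (hwalkconst w)
    have hwlog : ∃ u v, G.Adj u v ∧ ∃ c0, c0 ∈ L u ∧ c0 ∉ L v := by
      obtain ⟨u, v, huv, hLuv⟩ := hadjne
      by_cases hsub : ∃ c0, c0 ∈ L u ∧ c0 ∉ L v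
      · exact ⟨u, v, huv, hsub⟩
      · push_neg at hsub
        have hsub' : L u ⊆ L v := fun c hc => hsub c hc
        have : ∃ c0, c0 ∈ L v ∧ c0 ∉ L u := by
          by_contra h2
          push_neg at h2
          exact hLuv (Finset.Subset.antisymm hsub' (fun c hc => h2 c hc))
        exact ⟨v, u, huv.symm, this⟩
    obtain ⟨u, v, huv, c0, hc0u, hc0v⟩ := hwlog
    set L' : V → Finset α := fun w => if G.Adj u w then (L w).erase c0 else L w with hL'def
    have hvu : v ≠ u := huv.ne'
    have hRconn : ∀ x, x ∉ ({u} : Finset V) → BERT.ReachOut G ↑({u} : Finset V) x v := by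
      intro x hx
      have := hreach1 u x v (by simpa using hx) hvu
      simpa using this
    have hcA : ∀ x, x ∉ ({u} : Finset V) → x ≠ v →
        (G.neighborFinset x \ ({u} : Finset V)).card ≤ (L' x).card := by
      intro x hxR hxv
      have hxu : x ≠ u := by simpa using hxR
      simp only [hL'def]
      by_cases h2 : G.Adj u x
      · have hu_in : u ∈ G.neighborFinset x := by
          rw [SimpleGraph.mem_neighborFinset]; exact h2.symm
        have h3 : (G.neighborFinset x \ ({u} : Finset V)).card = G.degree x - 1 := by
          rw [Finset.sdiff_singleton_eq_erase, Finset.card_erase_of_mem hu_in,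
            SimpleGraph.card_neighborFinset_eq_degree]
        have h4 : (L x).card - 1 ≤ ((L x).erase c0).card := by
          by_cases h5 : c0 ∈ L x
          · rw [Finset.card_erase_of_mem h5]
          · rw [Finset.erase_eq_of_notMem h5]
            omega
        rw [if_pos h2, h3]
        have := hdegL x
        omega
      · rw [if_neg h2]
        have h3 : (G.neighborFinset x \ ({u} : Finset V)).card ≤ G.degree x := by
          rw [← SimpleGraph.card_neighborFinset_eq_degree]
          exact Finset.card_le_card (Finset.sdiff_subset)
        have := hdegL x
        omega
    have hc0A : (G.neighborFinset v \ ({u} : Finset V)).card < (L' v).card := by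
      have hu_in : u ∈ G.neighborFinset v := by
        rw [SimpleGraph.mem_neighborFinset]; exact huv.symm
      have h3 : (G.neighborFinset v \ ({u} : Finset V)).card = G.degree v - 1 := by
        rw [Finset.sdiff_singleton_eq_erase, Finset.card_erase_of_mem hu_in,
          SimpleGraph.card_neighborFinset_eq_degree]
      have h4 : (L' v).card = (L v).card := by
        simp only [hL'def]
        rw [if_pos huv, Finset.erase_eq_of_notMem hc0v]
      rw [h3, h4]
      have h5 := hdeg2 v
      have := hdegL v
      omega
    obtain ⟨φ, hmem, hprop⟩ := BERT.color_avoiding ({u} : Finset V) v (by simp [hvu]) hRconn L' hcA hc0A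
    refine ⟨Function.update φ u c0, ?_, ?_⟩
    · intro x
      by_cases hx : x = u
      · subst hx
        rw [Function.update_self]
        exact hc0u
      · rw [Function.update_of_ne hx]
        have := hmem x (by simp [hx])
        simp only [hL'def] at this
        by_cases h2 : G.Adj u x
        · rw [if_pos h2] at this
          exact Finset.mem_of_mem_erase this
        · rwa [if_neg h2] at this
    · intro x y hadj
      have hkey : ∀ z, G.Adj u z → Function.update φ u c0 z ≠ c0 := by
        intro z hz
        have hzu : z ≠ u := fun h => G.loopless.irrefl u (h ▸ hz)
        rw [Function.update_of_ne hzu]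
        have := hmem z (by simp [hzu])
        simp only [hL'def] at this
        rw [if_pos hz] at this
        exact Finset.ne_of_mem_erase this
      by_cases hx : x = u
      · subst hx
        rw [Function.update_self]
        exact (hkey y hadj).symm
      · by_cases hy : y = u
        · subst hy
          rw [Function.update_self, Function.update_of_ne hx]
          have := hkey x hadj.symm
          rw [Function.update_of_ne hx] at this
          exact this
        · rw [Function.update_of_ne hx, Function.update_of_ne hy]
          exact hprop x y (by simp [hx]) (by simp [hy]) hadj
end

section
/- Let G be a finite simple graph, T a subgraph of G, and L a list assignment on V(G) \ V(T) such that G is T-critical with respect to L. Let S be a subgraph of G and let G' be an S-component of G. Then G' is S-critical with respect to the restriction of L to V(G') \ V(S). -/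
open SimpleGraph

/-- Given a graph `G`, a subgraph `S` (the precolored part), a subgraph `K` and a list
assignment `L` (relevant on vertices outside `S`), a coloring `ψ` of `S` *extends to an
`L`-coloring of* `K` if there is a coloring `φ` agreeing with `ψ` on `V(S)`, choosing colors
from the lists on vertices of `K` outside `S`, and proper on `K`. -/
def ExtendsToColoring {V α : Type*} {G : SimpleGraph V} (S K : G.Subgraph)
    (L : V → Finset α) (ψ : V → α) : Prop :=
  ∃ φ : V → α, (∀ v ∈ S.verts, φ v = ψ v) ∧
    (∀ v ∈ K.verts, v ∉ S.verts → φ v ∈ L v) ∧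
    ∀ ⦃u v⦄, K.Adj u v → φ u ≠ φ v

/-- `ψ` is a proper coloring of the subgraph `S`. -/
def ProperOn {V α : Type*} {G : SimpleGraph V} (S : G.Subgraph) (ψ : V → α) : Prop :=
  ∀ ⦃u v⦄, S.Adj u v → ψ u ≠ ψ v

/-- The subgraph `H` is `S`-critical with respect to `L`: for every proper subgraph
`K` of `H` containing `S`, some proper coloring of `S` extends to an `L`-coloring of `K`
but not to an `L`-coloring of `H`. -/
def IsCriticalIn {V α : Type*} {G : SimpleGraph V} (H S : G.Subgraph)
    (L : V → Finset α) : Prop :=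
  ∀ K : G.Subgraph, S ≤ K → K ≤ H → K ≠ H →
    ∃ ψ : V → α, ProperOn S ψ ∧
      ExtendsToColoring S K L ψ ∧ ¬ ExtendsToColoring S H L ψ


/-- If a finite simple graph `G` is `T`-critical with respect to `L`, `S` is a subgraph of `G`,
and `G'` is an `S`-component of `G` (that is, `S ⊆ G'`, `T ∩ G' ⊆ S`, and every edge of `G`
incident with a vertex of `V(G') \ V(S)` belongs to `G'`), then `G'` is `S`-critical with
respect to the restriction of `L`. -/
theorem component_isCritical {V α : Type*} [Fintype V]
    (G : SimpleGraph V) (T : G.Subgraph) (L : V → Finset α)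
    (hcrit : IsCriticalIn (⊤ : G.Subgraph) T L)
    (S G' : G.Subgraph)
    (hSG' : S ≤ G')
    (hTG' : T ⊓ G' ≤ S)
    (hedges : ∀ ⦃u v : V⦄, G.Adj u v →
      (u ∈ G'.verts \ S.verts ∨ v ∈ G'.verts \ S.verts) → G'.Adj u v) :
    IsCriticalIn G' S L := by
  classical
  intro K hSK hKG' hKne
  have memM : ∀ ⦃u v : V⦄, G.Adj u v → ¬ G'.Adj u v →
      u ∈ (Set.univ \ G'.verts) ∪ K.verts := by
    intro u v hG hG'
    by_cases hu : u ∈ G'.verts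
    · by_cases hS : u ∈ S.verts
      · exact Or.inr (hSK.1 hS)
      · exact absurd (hedges hG (Or.inl ⟨hu, hS⟩)) hG'
    · exact Or.inl ⟨trivial, hu⟩
  let M : G.Subgraph :=
  { verts := (Set.univ \ G'.verts) ∪ K.verts
    Adj := fun u v => K.Adj u v ∨ (G.Adj u v ∧ ¬ G'.Adj u v)
    adj_sub := fun h => h.elim K.adj_sub And.left
    edge_vert := fun h => h.elim (fun h => Or.inr (K.edge_vert h))
      (fun h => memM h.1 h.2)
    symm := ⟨fun u v h => h.elim (fun h => Or.inl h.symm)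
      (fun h => Or.inr ⟨h.1.symm, fun h' => h.2 h'.symm⟩)⟩ }
  have hTM : T ≤ M := by
    constructor
    · intro v hv
      by_cases hG' : v ∈ G'.verts
      · exact Or.inr (hSK.1 (hTG'.1 ⟨hv, hG'⟩))
      · exact Or.inl ⟨trivial, hG'⟩
    · intro u v h
      by_cases hG' : G'.Adj u v
      · exact Or.inl (hSK.2 (hTG'.2 ⟨h, hG'⟩))
      · exact Or.inr ⟨T.adj_sub h, hG'⟩
  have hMne : M ≠ ⊤ := by
    intro heq
    apply hKne
    refine le_antisymm hKG' ?_
    constructor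
    · intro v hv
      have hM : v ∈ M.verts := by rw [heq]; trivial
      rcases hM with h | h
      · exact absurd hv h.2
      · exact h
    · intro u v h
      have hM : M.Adj u v := by
        rw [heq]
        exact G'.adj_sub h
      rcases hM with h' | h'
      · exact h'
      · exact absurd h h'.2
  obtain ⟨ψ₀, hψ₀T, ⟨φ, hφT, hφL, hφprop⟩, hnotext⟩ := hcrit M hTM le_top hMne
  refine ⟨φ, ?_, ?_, ?_⟩
  · intro u v h
    exact hφprop (Or.inl (hSK.2 h))
  · refine ⟨φ, fun v _ => rfl, ?_, fun u v h => hφprop (Or.inl h)⟩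
    intro v hvK hvS
    refine hφL v (Or.inr hvK) ?_
    intro hvT
    exact hvS (hTG'.1 ⟨hvT, hKG'.1 hvK⟩)
  · rintro ⟨φ', hφ'S, hφ'L, hφ'prop⟩
    apply hnotext
    refine ⟨fun v => if v ∈ G'.verts \ S.verts then φ' v else φ v, ?_, ?_, ?_⟩
    · intro v hv
      beta_reduce
      rw [if_neg]
      · exact hφT v hv
      · rintro ⟨hG', hS⟩
        exact hS (hTG'.1 ⟨hv, hG'⟩)
    · intro v _ hvT
      beta_reduce
      by_cases h : v ∈ G'.verts \ S.verts
      · rw [if_pos h]; exact hφ'L v h.1 h.2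
      · rw [if_neg h]
        refine hφL v ?_ hvT
        by_cases hG' : v ∈ G'.verts
        · by_cases hS : v ∈ S.verts
          · exact Or.inr (hSK.1 hS)
          · exact absurd ⟨hG', hS⟩ h
        · exact Or.inl ⟨trivial, hG'⟩
    · intro u v h
      have hGadj : G.Adj u v := h
      beta_reduce
      by_cases hu : u ∈ G'.verts \ S.verts <;> by_cases hv : v ∈ G'.verts \ S.verts
      · rw [if_pos hu, if_pos hv]
        exact hφ'prop (hedges hGadj (Or.inl hu))
      · rw [if_pos hu, if_neg hv]
        have hadj : G'.Adj u v := hedges hGadj (Or.inl hu)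
        have hvS : v ∈ S.verts := by
          by_contra hS
          exact hv ⟨G'.edge_vert hadj.symm, hS⟩
        rw [← hφ'S v hvS]
        exact hφ'prop hadj
      · rw [if_neg hu, if_pos hv]
        have hadj : G'.Adj u v := hedges hGadj (Or.inr hv)
        have huS : u ∈ S.verts := by
          by_contra hS
          exact hu ⟨G'.edge_vert hadj, hS⟩
        rw [← hφ'S u huS]
        exact hφ'prop hadj
      · rw [if_neg hu, if_neg hv]
        by_cases hadj : G'.Adj u v
        · have huS : u ∈ S.verts := by
            by_contra hS
            exact hu ⟨G'.edge_vert hadj, hS⟩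
          have hvS : v ∈ S.verts := by
            by_contra hS
            exact hv ⟨G'.edge_vert hadj.symm, hS⟩
          rw [← hφ'S u huS, ← hφ'S v hvS]
          exact hφ'prop hadj
        · exact hφprop (Or.inr ⟨hGadj, hadj⟩)
end

section
/- Let G be a finite simple triangle-free graph, S a subgraph of G, and L an assignment of lists of colors to the vertices of V(G) \ V(S). Let H be a 2-connected subgraph of G such that V(H) ∩ V(S) = ∅ and |L(v)| ≥ deg_G(v) for each v ∈ V(H). If G is S-critical with respect to L, then H is an induced odd cycle in G. -/
open SimpleGraph

/-- A subgraph `H` of `G` is 2-connected if it has at least three vertices and deleting any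
one of its vertices leaves it connected. -/
def Subgraph.TwoConnected {V : Type*} {G : SimpleGraph V} (H : G.Subgraph) : Prop :=
  3 ≤ H.verts.ncard ∧ ∀ v ∈ H.verts, ((H.deleteVerts {v}).coe).Connected

/-- A subgraph `H` of `G` is an induced odd cycle in `G` if it is an induced subgraph that is
connected, in which every vertex has exactly two neighbors, and whose number of vertices
is odd. -/
def Subgraph.IsInducedOddCycle {V : Type*} {G : SimpleGraph V} (H : G.Subgraph) : Prop :=
  H.IsInduced ∧ H.coe.Connected ∧ (∀ v ∈ H.verts, (H.neighborSet v).ncard = 2) ∧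
    Odd H.verts.ncard


set_option linter.unusedSectionVars false

namespace OC

variable {W : Type*} {α : Type*} {Γ : SimpleGraph W}

/-- Reachability within a set of vertices. -/
def RW (Γ : SimpleGraph W) (s : Set W) (u v : W) : Prop :=
  ∃ p : Γ.Walk u v, ∀ x ∈ p.support, x ∈ s

lemma RW.mono {s t : Set W} (hst : s ⊆ t) {u v} (h : RW Γ s u v) : RW Γ t u v := by
  obtain ⟨p, hp⟩ := h; exact ⟨p, fun x hx => hst (hp x hx)⟩

lemma RW.refl {s : Set W} {u} (h : u ∈ s) : RW Γ s u u :=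
  ⟨Walk.nil, by simp [h]⟩

lemma RW.symm {s : Set W} {u v} (h : RW Γ s u v) : RW Γ s v u := by
  obtain ⟨p, hp⟩ := h
  exact ⟨p.reverse, fun x hx => hp x (by simpa using hx)⟩

lemma RW.trans {s : Set W} {u v w} (h : RW Γ s u v) (h' : RW Γ s v w) : RW Γ s u w := by
  obtain ⟨p, hp⟩ := h; obtain ⟨q, hq⟩ := h'
  refine ⟨p.append q, fun x hx => ?_⟩
  rcases (Walk.mem_support_append_iff _ _).1 hx with h | h
  · exact hp x h
  · exact hq x h

lemma RW.adj {s : Set W} {u v} (h : Γ.Adj u v) (hu : u ∈ s) (hv : v ∈ s) : RW Γ s u v :=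
  ⟨Walk.cons h Walk.nil, by simp [hu, hv]⟩

lemma RW.mem_left {s : Set W} {u v} (h : RW Γ s u v) : u ∈ s := by
  obtain ⟨p, hp⟩ := h; exact hp u p.start_mem_support

lemma RW.mem_right {s : Set W} {u v} (h : RW Γ s u v) : v ∈ s := by
  obtain ⟨p, hp⟩ := h; exact hp v p.end_mem_support

/-- Crossing lemma: a walk from inside `C` to outside `C` uses an edge leaving `C`. -/
lemma crossing {C : Set W} : ∀ {x y : W} (p : Γ.Walk x y), x ∈ C → y ∉ C →
    ∃ a b, Γ.Adj a b ∧ a ∈ C ∧ b ∉ C ∧ a ∈ p.support ∧ b ∈ p.support := by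
  intro x y p
  induction p with
  | nil => intro hx hy; exact absurd hx hy
  | @cons x z y h q ih =>
    intro hx hy
    by_cases hz : z ∈ C
    · obtain ⟨a, b, hab, ha, hb, has, hbs⟩ := ih hz hy
      exact ⟨a, b, hab, ha, hb, by simp [has], by simp [hbs]⟩
    · exact ⟨x, z, h, hx, hz, by simp, by simp⟩

lemma RW.of_walk_mem [DecidableEq W] {s : Set W} {x y : W} (p : Γ.Walk x y)
    (hp : ∀ z ∈ p.support, z ∈ s) {z} (hz : z ∈ p.support) : RW Γ s x z :=
  ⟨p.takeUntil z hz, fun w hw => hp w (Walk.support_takeUntil_subset p hz hw)⟩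

/-- distance to `a` within `s`. -/
noncomputable def wd (Γ : SimpleGraph W) (s : Set W) (a v : W) : ℕ :=
  sInf {n | ∃ p : Γ.Walk v a, p.length = n ∧ ∀ x ∈ p.support, x ∈ s}

lemma exists_min_walk {s : Set W} {a v : W} (h : RW Γ s v a) :
    ∃ p : Γ.Walk v a, (∀ x ∈ p.support, x ∈ s) ∧ p.length = wd Γ s a v ∧
      ∀ (q : Γ.Walk v a), (∀ x ∈ q.support, x ∈ s) → wd Γ s a v ≤ q.length := by
  obtain ⟨p, hp⟩ := h
  have hne : {n | ∃ p : Γ.Walk v a, p.length = n ∧ ∀ x ∈ p.support, x ∈ s}.Nonempty :=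
    ⟨p.length, p, rfl, hp⟩
  obtain ⟨q, hq1, hq2⟩ := Nat.sInf_mem hne
  exact ⟨q, hq2, hq1, fun r hr => Nat.sInf_le ⟨r, rfl, hr⟩⟩

section Peel
variable [DecidableEq W]

lemma exists_peel (Γ : SimpleGraph W) :
    ∀ (s : Finset W) (a : W), a ∈ s → (∀ v ∈ s, RW Γ ↑s v a) →
    ∃ l : List W, l.Nodup ∧ l.toFinset = s ∧ (∃ l', l = l' ++ [a]) ∧
      ∀ l₁ v l₂, l = l₁ ++ v :: l₂ → v ≠ a → ∃ w ∈ l₂, Γ.Adj v w := by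
  intro s
  induction s using Finset.strongInduction with
  | _ s ih =>
    intro a ha hconn
    by_cases hsa : s = {a}
    · refine ⟨[a], by simp, by simp [hsa], ⟨[], rfl⟩, ?_⟩
      intro l₁ v l₂ hl hv
      cases l₁ with
      | nil => simp only [List.nil_append, List.cons.injEq] at hl; exact absurd hl.1.symm hv
      | cons x xs =>
        simp only [List.cons_append, List.cons.injEq] at hl
        exact absurd hl.2 (by simp)
    · have hF : (s.erase a).Nonempty := by
        obtain ⟨b, hb, hba⟩ : ∃ b ∈ s, b ≠ a := by
          by_contra hc
          push_neg at hc
          exact hsa (Finset.eq_singleton_iff_unique_mem.2 ⟨ha, hc⟩)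
        exact ⟨b, Finset.mem_erase.2 ⟨hba, hb⟩⟩
      obtain ⟨u, hu, hmax⟩ := Finset.exists_max_image (s.erase a) (wd Γ ↑s a) hF
      have hus : u ∈ s := (Finset.mem_erase.1 hu).2
      have hua : u ≠ a := (Finset.mem_erase.1 hu).1
      have hconn' : ∀ v ∈ s.erase u, RW Γ ↑(s.erase u) v a := by
        intro v hv
        have hvs : v ∈ s := (Finset.mem_erase.1 hv).2
        have hvu : v ≠ u := (Finset.mem_erase.1 hv).1
        rcases eq_or_ne v a with rfl | hva
        · exact RW.refl (by
            simp only [Finset.coe_erase, Set.mem_diff, Set.mem_singleton_iff, Finset.mem_coe]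
            exact ⟨ha, hua.symm⟩)
        · obtain ⟨p, hps, hplen, hpmin⟩ := exists_min_walk (hconn v hvs)
          have hunotin : u ∉ p.support := by
            intro husup
            have hlen : (p.takeUntil u husup).length + (p.dropUntil u husup).length
                = p.length := by
              have h := congrArg Walk.length (p.take_spec husup)
              rwa [Walk.length_append] at h
            have htpos : 0 < (p.takeUntil u husup).length := by
              rcases Nat.eq_zero_or_pos (p.takeUntil u husup).length with h0 | h
              · exact absurd (Walk.eq_of_length_eq_zero h0) hvu
              · exact h
            have h1 : wd Γ ↑s a u ≤ (p.dropUntil u husup).length :=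
              Nat.sInf_le ⟨p.dropUntil u husup, rfl,
                fun x hx => hps x (Walk.support_dropUntil_subset p husup hx)⟩
            have h2 : wd Γ ↑s a v ≤ wd Γ ↑s a u :=
              hmax v (Finset.mem_erase.2 ⟨hva, hvs⟩)
            omega
          refine ⟨p, fun x hx => ?_⟩
          simp only [Finset.coe_erase, Set.mem_diff, Set.mem_singleton_iff]
          exact ⟨hps x hx, fun h => hunotin (h ▸ hx)⟩
      have herase_ss : s.erase u ⊂ s := Finset.erase_ssubset hus
      have haerase : a ∈ s.erase u := Finset.mem_erase.2 ⟨hua.symm, ha⟩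
      obtain ⟨l'', hnd, htf, ⟨l''', hl'''⟩, hsplit⟩ := ih (s.erase u) herase_ss a haerase hconn'
      obtain ⟨p, hps, hplen, hpmin⟩ := exists_min_walk (hconn u hus)
      obtain ⟨w, hadj, hw⟩ : ∃ w, Γ.Adj u w ∧ w ∈ s.erase u := by
        cases p with
        | nil => exact absurd rfl hua
        | @cons _ z _ h q =>
          refine ⟨z, h, Finset.mem_erase.2 ⟨?_, hps z (by simp)⟩⟩
          rintro rfl
          have h1 : wd Γ ↑s a z ≤ q.length :=
            Nat.sInf_le ⟨q, rfl, fun x hx => hps x (by simp [hx])⟩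
          have h2 : (Walk.cons h q).length = q.length + 1 := by simp
          omega
      have hunotl : u ∉ l'' := by
        intro hu'
        have : u ∈ s.erase u := htf ▸ List.mem_toFinset.2 hu'
        simp at this
      refine ⟨u :: l'', by simp [List.nodup_cons, hnd, hunotl],
        by simp [htf, Finset.insert_erase hus], ⟨u :: l''', by simp [hl''']⟩, ?_⟩
      intro l₁ v l₂ hl hv
      cases l₁ with
      | nil =>
        simp only [List.nil_append, List.cons.injEq] at hl
        obtain ⟨rfl, rfl⟩ := hl
        exact ⟨w, (List.mem_toFinset.1 (htf ▸ hw) : w ∈ l''), hadj⟩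
      | cons x l₁' =>
        simp only [List.cons_append, List.cons.injEq] at hl
        exact hsplit l₁' v l₂ hl.2 hv

end Peel

lemma greedy (Γ : SimpleGraph W) [Nonempty α] (ℓ : W → Finset α) :
    ∀ (l : List W), l.Nodup →
    (∀ l₁ v l₂, l = l₁ ++ v :: l₂ → ∀ f : W → α, (∀ w ∈ l₁, f w ∈ ℓ w) →
      ∃ c ∈ ℓ v, ∀ w ∈ l₁, Γ.Adj v w → f w ≠ c) →
    ∃ σ : W → α, (∀ v ∈ l, σ v ∈ ℓ v) ∧
      ∀ u v, u ∈ l → v ∈ l → Γ.Adj u v → σ u ≠ σ v := by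
  classical
  intro l
  induction l using List.reverseRecOn with
  | nil => exact fun _ _ => ⟨fun _ => Classical.arbitrary α, by simp, by simp⟩
  | append_singleton l' v ihl =>
    intro hnd hyp
    rw [List.nodup_append] at hnd
    have hnd' : l'.Nodup := hnd.1
    have hvl' : v ∉ l' := fun h => hnd.2.2 v h v (by simp) rfl
    obtain ⟨σ, hσmem, hσprop⟩ := ihl hnd' (fun l₁ w l₂ hl f hf =>
      hyp l₁ w (l₂ ++ [v]) (by rw [hl]; simp) f hf)
    obtain ⟨c, hc, havoid⟩ := hyp l' v [] rfl σ hσmem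
    refine ⟨Function.update σ v c, ?_, ?_⟩
    · intro w hw
      rcases List.mem_append.1 hw with h | h
      · rw [Function.update_of_ne (by rintro rfl; exact hvl' h)]; exact hσmem w h
      · simp only [List.mem_singleton] at h; subst h; simp [hc]
    · intro x y hx hy hadj
      have hxc : x ∈ l' ∨ x = v := by simpa using hx
      have hyc : y ∈ l' ∨ y = v := by simpa using hy
      rcases hxc with hx' | rfl
      · rcases hyc with hy' | rfl
        · rw [Function.update_of_ne (by rintro rfl; exact hvl' hx'),
            Function.update_of_ne (by rintro rfl; exact hvl' hy')]
          exact hσprop x y hx' hy' hadj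
        · rw [Function.update_of_ne (by rintro rfl; exact hvl' hx'), Function.update_self]
          exact havoid x hx' hadj.symm
      · rcases hyc with hy' | rfl
        · rw [Function.update_self, Function.update_of_ne (by rintro rfl; exact hvl' hy')]
          exact fun h => (havoid y hy' hadj) h.symm
        · exact absurd hadj (Γ.irrefl)

section Color
variable [Fintype W] [DecidableEq W] [DecidableEq α] (Γ : SimpleGraph W) [DecidableRel Γ.Adj]

lemma colorable_on_of_surplus (s : Finset W) (a : W) (ha : a ∈ s)
    (hconn : ∀ v ∈ s, RW Γ ↑s v a) (ℓ : W → Finset α)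
    (hd : ∀ v ∈ s, ((Γ.neighborFinset v) ∩ s).card ≤ (ℓ v).card)
    (hsur : ((Γ.neighborFinset a) ∩ s).card < (ℓ a).card) :
    ∃ σ : W → α, (∀ v ∈ s, σ v ∈ ℓ v) ∧
      ∀ u v, u ∈ s → v ∈ s → Γ.Adj u v → σ u ≠ σ v := by
  have hℓa : (ℓ a).Nonempty := Finset.card_pos.1 (lt_of_le_of_lt (Nat.zero_le _) hsur)
  have hne : Nonempty α := ⟨hℓa.choose⟩
  obtain ⟨l, hnd, htf, _, hsplit⟩ := exists_peel Γ s a ha hconn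
  have key : ∀ l₁ v l₂, l = l₁ ++ v :: l₂ → ∀ f : W → α, (∀ w ∈ l₁, f w ∈ ℓ w) →
      ∃ c ∈ ℓ v, ∀ w ∈ l₁, Γ.Adj v w → f w ≠ c := by
    intro l₁ v l₂ hl f hf
    have hvs : v ∈ s := by rw [← htf, hl]; simp
    have hsub1 : l₁.toFinset ⊆ s := by
      rw [← htf, hl]; intro x hx; simp only [List.mem_toFinset] at hx; simp [hx]
    set T := (Γ.neighborFinset v) ∩ l₁.toFinset with hT
    have hTcard : T.card < (ℓ v).card := by
      rcases eq_or_ne v a with rfl | hva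
      · refine lt_of_le_of_lt (Finset.card_le_card ?_) hsur
        intro x hx; simp only [hT, Finset.mem_inter] at hx ⊢
        exact ⟨hx.1, hsub1 hx.2⟩
      · obtain ⟨w, hwl₂, hadj⟩ := hsplit l₁ v l₂ hl hva
        have hws : w ∈ s := by rw [← htf, hl]; simp [hwl₂]
        have hwnl₁ : w ∉ l₁ := by
          intro hwl₁
          have hnd' := hnd; rw [hl, List.nodup_append] at hnd'
          exact hnd'.2.2 w hwl₁ w (by simp [hwl₂]) rfl
        have hwmem : w ∈ (Γ.neighborFinset v) ∩ s := by
          simp [SimpleGraph.mem_neighborFinset, hadj, hws]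
        have hTsub : T ⊆ ((Γ.neighborFinset v) ∩ s).erase w := by
          intro x hx
          simp only [hT, Finset.mem_inter, List.mem_toFinset] at hx
          refine Finset.mem_erase.2 ⟨?_, Finset.mem_inter.2
            ⟨hx.1, hsub1 (List.mem_toFinset.2 hx.2)⟩⟩
          rintro rfl; exact hwnl₁ hx.2
        have h1 : T.card ≤ ((Γ.neighborFinset v) ∩ s).card - 1 :=
          (Finset.card_le_card hTsub).trans (Finset.card_erase_of_mem hwmem).le
        have h2 : 0 < ((Γ.neighborFinset v) ∩ s).card := Finset.card_pos.2 ⟨w, hwmem⟩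
        have h3 := hd v hvs
        omega
    have himg : (T.image f).card < (ℓ v).card :=
      lt_of_le_of_lt Finset.card_image_le hTcard
    obtain ⟨c, hc⟩ : (ℓ v \ T.image f).Nonempty := by
      rw [← Finset.card_pos]
      have := Finset.le_card_sdiff (T.image f) (ℓ v)
      omega
    refine ⟨c, (Finset.mem_sdiff.1 hc).1, ?_⟩
    intro w hw hadj heq
    apply (Finset.mem_sdiff.1 hc).2
    exact Finset.mem_image.2 ⟨w, by
      simp only [hT, Finset.mem_inter, List.mem_toFinset, SimpleGraph.mem_neighborFinset]
      exact ⟨hadj, hw⟩, heq⟩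
  obtain ⟨σ, hmem, hprop⟩ := greedy Γ ℓ l hnd key
  have hmem' : ∀ v ∈ s, v ∈ l := fun v hv => List.mem_toFinset.1 (htf ▸ hv)
  exact ⟨σ, fun v hv => hmem v (hmem' v hv),
    fun u v hu hv hadj => hprop u v (hmem' u hu) (hmem' v hv) hadj⟩

lemma colorable_of_nonuniform
    (h2 : ∀ (u x y : W), x ≠ u → y ≠ u → RW Γ {u}ᶜ x y)
    (u v : W) (huv : Γ.Adj u v) (ℓ : W → Finset α)
    (hdeg : ∀ w, Γ.degree w ≤ (ℓ w).card)
    (c : α) (hcu : c ∈ ℓ u) (hcv : c ∉ ℓ v) :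
    ∃ σ : W → α, (∀ w, σ w ∈ ℓ w) ∧ ∀ ⦃x y⦄, Γ.Adj x y → σ x ≠ σ y := by
  set s := Finset.univ.erase u with hs
  have hcoe : (↑s : Set W) = {u}ᶜ := by
    ext x; simp [hs]
  have hva : v ∈ s := by simp [hs, huv.ne']
  have hconn : ∀ w ∈ s, RW Γ ↑s w v := by
    intro w hw
    rw [hcoe]
    exact h2 u w v (by simpa [hs] using hw) huv.ne'
  set ℓ' : W → Finset α := fun w => if Γ.Adj u w then ℓ w \ {c} else ℓ w with hℓ'
  have hnbr : ∀ w ∈ s, (Γ.neighborFinset w) ∩ s = (Γ.neighborFinset w).erase u := by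
    intro w hw
    ext x; simp [hs, Finset.mem_erase, and_comm]
  have hd : ∀ w ∈ s, ((Γ.neighborFinset w) ∩ s).card ≤ (ℓ' w).card := by
    intro w hw
    rw [hnbr w hw]
    by_cases hadj : Γ.Adj u w
    · have h1 : ((Γ.neighborFinset w).erase u).card = Γ.degree w - 1 := by
        rw [Finset.card_erase_of_mem (by simpa [SimpleGraph.mem_neighborFinset] using hadj.symm)]
        rfl
      have h2 : (ℓ w).card - 1 ≤ (ℓ' w).card := by
        simp only [hℓ', if_pos hadj]
        have := Finset.le_card_sdiff ({c} : Finset α) (ℓ w)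
        simpa using this
      have := hdeg w
      omega
    · have h1 : (Γ.neighborFinset w).erase u = Γ.neighborFinset w := by
        apply Finset.erase_eq_of_notMem
        simp [SimpleGraph.mem_neighborFinset]
        exact fun h => hadj h.symm
      rw [h1]
      simp only [hℓ', if_neg hadj]
      exact (SimpleGraph.card_neighborFinset_eq_degree Γ w) ▸ hdeg w
  have hsur : ((Γ.neighborFinset v) ∩ s).card < (ℓ' v).card := by
    rw [hnbr v hva]
    have humem : u ∈ Γ.neighborFinset v := by
      simp [SimpleGraph.mem_neighborFinset, huv.symm]
    have h1 : ((Γ.neighborFinset v).erase u).card = Γ.degree v - 1 := by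
      rw [Finset.card_erase_of_mem humem]; rfl
    have h2 : (ℓ' v).card = (ℓ v).card := by
      simp only [hℓ', if_pos huv]
      congr 1
      rw [Finset.sdiff_singleton_eq_erase, Finset.erase_eq_of_notMem hcv]
    have h3 : 0 < Γ.degree v := by
      rw [← SimpleGraph.card_neighborFinset_eq_degree]
      exact Finset.card_pos.2 ⟨u, humem⟩
    have := hdeg v
    omega
  obtain ⟨σ, hmem, hprop⟩ := colorable_on_of_surplus Γ s v hva hconn ℓ' hd hsur
  refine ⟨Function.update σ u c, ?_, ?_⟩
  · intro w
    rcases eq_or_ne w u with rfl | hwu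
    · simpa using hcu
    · rw [Function.update_of_ne hwu]
      have := hmem w (by simp [hs, hwu])
      by_cases hadj : Γ.Adj u w
      · simp only [hℓ', if_pos hadj] at this
        exact Finset.mem_sdiff.1 this |>.1
      · simpa only [hℓ', if_neg hadj] using this
  · intro x y hadj
    rcases eq_or_ne x u with rfl | hxu
    · rw [Function.update_self, Function.update_of_ne hadj.ne']
      have := hmem y (by simp [hs, hadj.ne'])
      simp only [hℓ', if_pos hadj] at this
      intro h
      exact (Finset.mem_sdiff.1 this).2 (by simp [← h])
    · rcases eq_or_ne y u with rfl | hyu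
      · rw [Function.update_self, Function.update_of_ne hxu]
        have := hmem x (by simp [hs, hxu])
        simp only [hℓ', if_pos hadj.symm] at this
        intro h
        exact (Finset.mem_sdiff.1 this).2 (by simp [h])
      · rw [Function.update_of_ne hxu, Function.update_of_ne hyu]
        exact hprop x y (by simp [hs, hxu]) (by simp [hs, hyu]) hadj

end Color
section Gadget
variable [Fintype W] [DecidableEq W] (Γ : SimpleGraph W) [DecidableRel Γ.Adj]

lemma exists_third (hcard : 3 ≤ Fintype.card W) (x y : W) : ∃ u : W, u ≠ x ∧ u ≠ y := by
  have h1 : Finset.univ.card = Fintype.card W := Finset.card_univ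
  have h2 : (Finset.univ.erase x).card ≥ Fintype.card W - 1 := by
    rw [Finset.card_erase_of_mem (Finset.mem_univ x)]; omega
  have h3 : ((Finset.univ.erase x).erase y).card ≥ Fintype.card W - 2 := by
    have := Finset.pred_card_le_card_erase (s := Finset.univ.erase x) (a := y)
    omega
  obtain ⟨u, hu⟩ : ((Finset.univ.erase x).erase y).Nonempty := by
    rw [← Finset.card_pos]; omega
  rw [Finset.mem_erase, Finset.mem_erase] at hu
  exact ⟨u, hu.2.1, hu.1⟩

lemma conn_univ (hcard : 3 ≤ Fintype.card W)
    (h2 : ∀ (u x y : W), x ≠ u → y ≠ u → RW Γ {u}ᶜ x y) (x y : W) :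
    RW Γ Set.univ x y := by
  obtain ⟨u, hux, huy⟩ := exists_third hcard x y
  exact (h2 u x y (Ne.symm hux) (Ne.symm huy)).mono (by simp)

lemma exists_two_nbrs (hcard : 3 ≤ Fintype.card W)
    (h2 : ∀ (u x y : W), x ≠ u → y ≠ u → RW Γ {u}ᶜ x y) (v : W) :
    ∃ z₁ z₂, Γ.Adj v z₁ ∧ Γ.Adj v z₂ ∧ z₁ ≠ z₂ := by
  have step : ∀ u : W, u ≠ v → ∃ z, Γ.Adj v z ∧ z ≠ u := by
    intro u hu
    obtain ⟨x, hx1, hx2⟩ := exists_third hcard u v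
    obtain ⟨p, hp⟩ := h2 u v x (Ne.symm hu) hx1
    cases p with
    | nil => exact absurd rfl (Ne.symm hx2)
    | @cons _ z _ h q =>
      refine ⟨z, h, ?_⟩
      have := hp z (by simp)
      simpa using this
  obtain ⟨u0, hu0, _⟩ := exists_third hcard v v
  obtain ⟨z₁, hz₁, _⟩ := step u0 hu0
  obtain ⟨z₂, hz₂, hne⟩ := step z₁ hz₁.ne'
  exact ⟨z₂, z₁, hz₂, hz₁, hne⟩

lemma gadget (tf : Γ.CliqueFree 3) (hcard : 3 ≤ Fintype.card W)
    (h2 : ∀ (u x y : W), x ≠ u → y ≠ u → RW Γ {u}ᶜ x y)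
    (hmin : ∀ v, 3 ≤ Γ.degree v) :
    ∃ a b c : W, Γ.Adj a b ∧ Γ.Adj a c ∧ b ≠ c ∧ ¬ Γ.Adj b c ∧
      ∀ x y : W, x ≠ b → x ≠ c → y ≠ b → y ≠ c → RW Γ (({b, c} : Set W)ᶜ) x y := by
  classical
  have hne : Nonempty W := Fintype.card_pos_iff.1 (by omega)
  obtain ⟨u₀⟩ := hne
  have htf : ∀ a b c : W, Γ.Adj a b → Γ.Adj a c → b ≠ c → ¬ Γ.Adj b c := by
    intro a b c hab hac hbc habc
    exact tf {a, b, c} (SimpleGraph.is3Clique_triple_iff.2 ⟨hab, hac, habc⟩)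
  have hnbr_sub : ∀ (v e₁ e₂ : W), ∃ q, Γ.Adj v q ∧ q ≠ e₁ ∧ q ≠ e₂ := by
    intro v e₁ e₂
    have h3 := hmin v
    rw [← SimpleGraph.card_neighborFinset_eq_degree] at h3
    have hcv : 1 ≤ (((Γ.neighborFinset v).erase e₁).erase e₂).card := by
      have ha := Finset.pred_card_le_card_erase (s := Γ.neighborFinset v) (a := e₁)
      have hb := Finset.pred_card_le_card_erase (s := (Γ.neighborFinset v).erase e₁) (a := e₂)
      omega
    obtain ⟨q, hq⟩ := Finset.card_pos.1
      (show 0 < (((Γ.neighborFinset v).erase e₁).erase e₂).card by omega)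
    rw [Finset.mem_erase, Finset.mem_erase, SimpleGraph.mem_neighborFinset] at hq
    exact ⟨q, hq.2.2, hq.2.1, hq.1⟩
  by_cases hA : ∀ z, z ≠ u₀ → ∀ x y, x ≠ u₀ → x ≠ z → y ≠ u₀ → y ≠ z →
      RW Γ (({u₀, z} : Set W)ᶜ) x y
  · obtain ⟨a, ha, _, _⟩ := hnbr_sub u₀ u₀ u₀
    obtain ⟨c, hc, hcu, _⟩ := hnbr_sub a u₀ u₀
    refine ⟨a, u₀, c, ha.symm, hc, Ne.symm hcu, htf a u₀ c ha.symm hc (Ne.symm hcu), ?_⟩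
    intro x y hxb hxc hyb hyc
    exact hA c hcu x y hxb hxc hyb hyc
  · push_neg at hA
    obtain ⟨z₀, hz₀u, x₀, y₀, hx₀u, hx₀z, hy₀u, hy₀z, hnr⟩ := hA
    set Cset : W → W → Set W := fun z x => {y | RW Γ (({u₀, z} : Set W)ᶜ) x y} with hCset
    set Q : W × W → Prop := fun q => q.1 ≠ u₀ ∧ q.2 ≠ u₀ ∧ q.2 ≠ q.1 ∧
      ∃ y, y ≠ u₀ ∧ y ≠ q.1 ∧ ¬ RW Γ (({u₀, q.1} : Set W)ᶜ) q.2 y with hQdef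
    have hQne : (Finset.univ.filter Q).Nonempty := by
      refine ⟨(z₀, x₀), ?_⟩
      simp only [Finset.mem_filter, Finset.mem_univ, true_and, hQdef]
      exact ⟨hz₀u, hx₀u, hx₀z, y₀, hy₀u, hy₀z, hnr⟩
    obtain ⟨⟨z, x⟩, hQmem, hminQ⟩ :=
      Finset.exists_min_image (Finset.univ.filter Q) (fun q => (Cset q.1 q.2).ncard) hQne
    simp only [Finset.mem_filter, Finset.mem_univ, true_and, hQdef] at hQmem
    obtain ⟨hzu, hxu, hxz, y, hyu, hyz, hyNR⟩ := hQmem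
    set s : Set W := ({u₀, z} : Set W)ᶜ with hs
    have hmem_s : ∀ t : W, t ∈ s ↔ t ≠ u₀ ∧ t ≠ z := by
      intro t; simp [hs]
    set C : Set W := Cset z x with hC
    have hxC : x ∈ C := RW.refl ((hmem_s x).2 ⟨hxu, hxz⟩)
    have hCs : ∀ ⦃t⦄, t ∈ C → t ∈ s := fun t ht => RW.mem_right ht
    have hclosure : ∀ p q, p ∈ C → q ∈ s → Γ.Adj p q → q ∈ C :=
      fun p q hp hq hadj => RW.trans hp (RW.adj hadj (hCs hp) hq)
    have hyNC : y ∉ C := hyNR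
    -- F4 : u₀ has a neighbour in C
    obtain ⟨v, hvadj, hvC⟩ : ∃ v, Γ.Adj u₀ v ∧ v ∈ C := by
      obtain ⟨p, hp⟩ := h2 z x y hxz hyz
      obtain ⟨a', b', hab, haC, hbNC, _, hbs⟩ := crossing p hxC hyNC
      have hbz : b' ≠ z := by simpa using hp b' hbs
      rcases eq_or_ne b' u₀ with rfl | hbu
      · exact ⟨a', hab.symm, haC⟩
      · exact absurd (hclosure a' b' haC ((hmem_s b').2 ⟨hbu, hbz⟩) hab) hbNC
    -- F5
    have F5 : ∀ c', c' ∈ C → ∀ w, w ≠ u₀ → w ≠ c' →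
        RW Γ (({u₀, c'} : Set W)ᶜ) w z := by
      intro c' hc' w hwu hwc'
      have hc'mem := hCs hc'
      rw [hmem_s] at hc'mem
      obtain ⟨hc'u, hc'z⟩ := hc'mem
      have hzmem : z ∈ (({u₀, c'} : Set W)ᶜ) := by simp [hzu, Ne.symm hc'z]
      rcases eq_or_ne w z with rfl | hwz
      · exact RW.refl hzmem
      by_cases hwC : w ∈ C
      · by_contra hno
        have hQ' : Q (c', w) := ⟨hc'u, hwu, hwc', z, hzu, Ne.symm hc'z, hno⟩
        have hQmem' : (c', w) ∈ Finset.univ.filter Q := by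
          simp only [Finset.mem_filter, Finset.mem_univ, true_and]
          exact hQ'
        have hmin'' : C.ncard ≤ (Cset c' w).ncard := hminQ (c', w) hQmem'
        have hsub : Cset c' w ⊆ C \ {c'} := by
          intro y' hy'
          obtain ⟨q, hq⟩ := hy'
          have hznot : z ∉ q.support := by
            intro hzq
            exact hno (RW.of_walk_mem q hq hzq)
          have hrw : RW Γ s w y' := by
            refine ⟨q, fun t ht => ?_⟩
            have h1 := hq t ht
            simp only [Set.mem_compl_iff, Set.mem_insert_iff, Set.mem_singleton_iff,
              not_or] at h1
            rw [hmem_s]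
            exact ⟨h1.1, fun h => hznot (h ▸ ht)⟩
          refine ⟨RW.trans hwC hrw, ?_⟩
          have := hq y' q.end_mem_support
          simp only [Set.mem_compl_iff, Set.mem_insert_iff, Set.mem_singleton_iff,
            not_or, Set.mem_singleton_iff] at this ⊢
          exact this.2
        have hlt : (Cset c' w).ncard < C.ncard := by
          have h1 : (Cset c' w).ncard ≤ (C \ {c'}).ncard :=
            Set.ncard_le_ncard hsub ((C \ {c'}).toFinite)
          have h2 : (C \ {c'}).ncard < C.ncard :=
            Set.ncard_diff_singleton_lt_of_mem hc' C.toFinite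
          calc (Cset c' w).ncard ≤ (C \ {c'}).ncard := h1
          _ < C.ncard := h2
        exact absurd hmin'' hlt.not_ge
      · -- w ∉ C : walk avoiding C entirely
        obtain ⟨p, hp⟩ := h2 u₀ w z hwu hzu
        have hzp : z ∈ p.support := p.end_mem_support
        set p' := p.takeUntil z hzp with hp'def
        have hp'u : ∀ t ∈ p'.support, t ≠ u₀ := by
          intro t ht
          have := hp t (Walk.support_takeUntil_subset p hzp ht)
          simpa using this
        have hCnot : ∀ t ∈ p'.support, t ∉ C := by
          intro t ht htC
          have htz : t ≠ z := by
            intro h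
            have := hCs htC
            rw [hmem_s] at this
            exact this.2 h
          have hznotp'' : z ∉ (p'.takeUntil t ht).support := by
            intro hz''
            have hcount := p.count_support_takeUntil_eq_one hzp
            have hspec := p'.take_spec ht
            have hsupp : p'.support
                = (p'.takeUntil t ht).support ++ (p'.dropUntil t ht).support.tail := by
              rw [← Walk.support_append, hspec]
            have hz2 : z ∈ (p'.dropUntil t ht).support.tail := by
              have hzend : z ∈ (p'.dropUntil t ht).support :=
                (p'.dropUntil t ht).end_mem_support
              have : (p'.dropUntil t ht).support
                  = t :: (p'.dropUntil t ht).support.tail :=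
                Walk.support_eq_cons _
              rw [this] at hzend
              rw [List.mem_cons] at hzend
              rcases hzend with h | h
              · exact absurd rfl (h ▸ htz)
              · exact h
            have : (2 : ℕ) ≤ p'.support.count z := by
              rw [hsupp, List.count_append]
              have c1 : 1 ≤ (p'.takeUntil t ht).support.count z :=
                List.count_pos_iff.2 hz''
              have c2 : 1 ≤ ((p'.dropUntil t ht).support.tail).count z :=
                List.count_pos_iff.2 hz2
              omega
            rw [hp'def] at this
            omega
          have hrw : RW Γ s w t := by
            refine ⟨p'.takeUntil t ht, fun r hr => ?_⟩
            rw [hmem_s]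
            exact ⟨hp'u r (Walk.support_takeUntil_subset p' ht hr),
              fun h => hznotp'' (h ▸ hr)⟩
          exact hwC (RW.trans htC hrw.symm)
        refine ⟨p', fun t ht => ?_⟩
        simp only [Set.mem_compl_iff, Set.mem_insert_iff, Set.mem_singleton_iff, not_or]
        exact ⟨hp'u t ht, fun h => hCnot t ht (h ▸ hc')⟩
    -- assemble
    obtain ⟨q', hq'adj, hq'u, hq'z⟩ := hnbr_sub v u₀ z
    have hvs : v ∈ s := hCs hvC
    have hq'C : q' ∈ C := hclosure v q' hvC ((hmem_s q').2 ⟨hq'u, hq'z⟩) hq'adj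
    refine ⟨v, u₀, q', hvadj.symm, hq'adj, Ne.symm hq'u,
      htf v u₀ q' hvadj.symm hq'adj (Ne.symm hq'u), ?_⟩
    intro x' y' hx'b hx'c hy'b hy'c
    have h1 := F5 q' hq'C x' hx'b hx'c
    have h2' := F5 q' hq'C y' hy'b hy'c
    exact RW.trans h1 (RW.symm h2')

end Gadget
section GColor
variable [Fintype W] [DecidableEq W] [DecidableEq α] (Γ : SimpleGraph W) [DecidableRel Γ.Adj]

lemma colorable_of_gadget (C : Finset α) (hC3 : 3 ≤ C.card)
    (hreg : ∀ v, Γ.degree v = C.card)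
    (a b c : W) (hab : Γ.Adj a b) (hac : Γ.Adj a c) (hbc : b ≠ c) (hnadj : ¬ Γ.Adj b c)
    (hconn : ∀ x y : W, x ≠ b → x ≠ c → y ≠ b → y ≠ c → RW Γ (({b, c} : Set W)ᶜ) x y) :
    ∃ σ : W → α, (∀ v, σ v ∈ C) ∧ ∀ ⦃x y⦄, Γ.Adj x y → σ x ≠ σ y := by
  classical
  obtain ⟨c₀, hc₀⟩ : C.Nonempty := Finset.card_pos.1 (by omega)
  have hnea : Nonempty α := ⟨c₀⟩
  set s₁ : Finset W := (Finset.univ.erase b).erase c with hs₁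
  have hmem_s₁ : ∀ t, t ∈ s₁ ↔ t ≠ b ∧ t ≠ c := by
    intro t; simp only [hs₁, Finset.mem_erase, Finset.mem_univ, and_true]; tauto
  have has₁ : a ∈ s₁ := (hmem_s₁ a).2 ⟨hab.ne, hac.ne⟩
  have hcoe : (↑s₁ : Set W) = (({b, c} : Set W)ᶜ) := by
    ext t
    rw [Finset.mem_coe, hmem_s₁ t]
    simp only [Set.mem_compl_iff, Set.mem_insert_iff, Set.mem_singleton_iff, not_or]
  have hconn' : ∀ v ∈ s₁, RW Γ ↑s₁ v a := by
    intro v hv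
    rw [hcoe]
    rw [hmem_s₁] at hv
    exact hconn v a hv.1 hv.2 hab.ne hac.ne
  obtain ⟨l₀, hnd₀, htf₀, ⟨l₀', hl₀'⟩, hsplit₀⟩ := exists_peel Γ s₁ a has₁ hconn'
  have hbl₀ : b ∉ l₀ := by
    intro h
    have := htf₀ ▸ List.mem_toFinset.2 h
    rw [hmem_s₁] at this; exact this.1 rfl
  have hcl₀ : c ∉ l₀ := by
    intro h
    have := htf₀ ▸ List.mem_toFinset.2 h
    rw [hmem_s₁] at this; exact this.2 rfl
  set ℓ : W → Finset α := fun v => if v = b ∨ v = c then {c₀} else C with hℓ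
  set l : List W := b :: c :: l₀ with hl
  have hnd : l.Nodup := by
    simp only [hl, List.nodup_cons, List.mem_cons, not_or]
    exact ⟨⟨hbc, hbl₀⟩, hcl₀, hnd₀⟩
  have hcover : ∀ v : W, v ∈ l := by
    intro v
    rcases eq_or_ne v b with rfl | hvb
    · simp [hl]
    rcases eq_or_ne v c with rfl | hvc
    · simp [hl]
    have : v ∈ s₁ := (hmem_s₁ v).2 ⟨hvb, hvc⟩
    simp only [hl, List.mem_cons]
    exact Or.inr (Or.inr (List.mem_toFinset.1 (htf₀ ▸ this)))
  have key : ∀ l₁ v l₂, l = l₁ ++ v :: l₂ → ∀ f : W → α, (∀ w ∈ l₁, f w ∈ ℓ w) →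
      ∃ d ∈ ℓ v, ∀ w ∈ l₁, Γ.Adj v w → f w ≠ d := by
    intro l₁ v l₂ hsplit f hf
    cases l₁ with
    | nil =>
      simp only [hl, List.nil_append, List.cons.injEq] at hsplit
      obtain ⟨rfl, -⟩ := hsplit
      exact ⟨c₀, by simp [hℓ], by simp⟩
    | cons x l₁' =>
      rw [hl] at hsplit
      rw [List.cons_append] at hsplit
      injection hsplit with h1 h2
      subst h1
      cases l₁' with
      | nil =>
        rw [List.nil_append] at h2
        injection h2 with h3 h4
        subst h3
        refine ⟨c₀, by simp [hℓ], ?_⟩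
        intro w hw hadj
        simp only [List.mem_singleton] at hw
        subst hw
        exact absurd hadj.symm hnadj
      | cons x' l₁'' =>
        rw [List.cons_append] at h2
        injection h2 with h3 hsplit₀'
        subst h3
        have hvs₁ : v ∈ s₁ := by
          rw [← htf₀, hsplit₀']; simp
        rw [hmem_s₁] at hvs₁
        obtain ⟨hvb, hvc⟩ := hvs₁
        have hℓv : ℓ v = C := by simp [hℓ, hvb, hvc]
        set T := (Γ.neighborFinset v) ∩ (b :: c :: l₁'').toFinset with hT
        have havoid : ∀ d, d ∈ ℓ v \ T.image f →
            d ∈ ℓ v ∧ ∀ w ∈ (b :: c :: l₁''), Γ.Adj v w → f w ≠ d := by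
          intro d hd
          refine ⟨(Finset.mem_sdiff.1 hd).1, fun w hw hadj heq => ?_⟩
          apply (Finset.mem_sdiff.1 hd).2
          refine Finset.mem_image.2 ⟨w, ?_, heq⟩
          simp only [hT, Finset.mem_inter, List.mem_toFinset, SimpleGraph.mem_neighborFinset]
          exact ⟨hadj, hw⟩
        rcases eq_or_ne v a with rfl | hva
        · -- last vertex a : use that b and c get the same colour c₀
          have hfb : f b = c₀ := by
            have := hf b (by simp)
            simpa [hℓ] using this
          have hfc : f c = c₀ := by
            have := hf c (by simp)
            simpa [hℓ] using this
          set U := ((Γ.neighborFinset v).erase b).erase c with hU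
          have himg : T.image f ⊆ insert c₀ (U.image f) := by
            intro d hd
            obtain ⟨w, hwT, rfl⟩ := Finset.mem_image.1 hd
            rcases eq_or_ne w b with rfl | hwb
            · simp [hfb]
            rcases eq_or_ne w c with rfl | hwc
            · simp [hfc]
            refine Finset.mem_insert_of_mem (Finset.mem_image.2 ⟨w, ?_, rfl⟩)
            simp only [hU, Finset.mem_erase]
            exact ⟨hwc, hwb, (Finset.mem_inter.1 hwT).1⟩
          have hUcard : U.card = C.card - 2 := by
            have hbmem : b ∈ Γ.neighborFinset v := by
              simp [SimpleGraph.mem_neighborFinset, hab]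
            have hcmem : c ∈ (Γ.neighborFinset v).erase b := by
              rw [Finset.mem_erase]
              exact ⟨Ne.symm hbc, by simp [SimpleGraph.mem_neighborFinset, hac]⟩
            rw [hU, Finset.card_erase_of_mem hcmem, Finset.card_erase_of_mem hbmem,
              SimpleGraph.card_neighborFinset_eq_degree, hreg v]
            omega
          have hbound : (T.image f).card < C.card := by
            have h1 := Finset.card_le_card himg
            have h2 : (insert c₀ (U.image f)).card ≤ (U.image f).card + 1 :=
              Finset.card_insert_le _ _
            have h3 : (U.image f).card ≤ U.card := Finset.card_image_le
            omega
          obtain ⟨d, hd⟩ : (ℓ v \ T.image f).Nonempty := by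
            rw [← Finset.card_pos]
            have := Finset.le_card_sdiff (T.image f) (ℓ v)
            rw [hℓv] at this ⊢
            omega
          obtain ⟨hd1, hd2⟩ := havoid d hd
          exact ⟨d, hd1, hd2⟩
        · -- middle vertex : it has a later neighbour
          obtain ⟨w₀, hw₀l₂, hw₀adj⟩ := hsplit₀ l₁'' v l₂ hsplit₀' hva
          have hw₀T : w₀ ∉ (b :: c :: l₁'') := by
            intro hmem
            have hndl : ((b :: c :: l₁'') ++ (v :: l₂)).Nodup := by
              have heq : l = (b :: c :: l₁'') ++ (v :: l₂) := by
                rw [hl, hsplit₀']; rfl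
              rw [← heq]; exact hnd
            exact (List.nodup_append.1 hndl).2.2 w₀ hmem w₀ (by simp [hw₀l₂]) rfl
          have hTsub : T ⊆ (Γ.neighborFinset v).erase w₀ := by
            intro t ht
            simp only [hT, Finset.mem_inter, List.mem_toFinset] at ht
            exact Finset.mem_erase.2 ⟨fun h => hw₀T (h ▸ ht.2), ht.1⟩
          have hbound : (T.image f).card < C.card := by
            have h1 := Finset.card_le_card hTsub
            have h2 : ((Γ.neighborFinset v).erase w₀).card = C.card - 1 := by
              rw [Finset.card_erase_of_mem (by simp [SimpleGraph.mem_neighborFinset, hw₀adj]),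
                SimpleGraph.card_neighborFinset_eq_degree, hreg v]
            have h3 : (T.image f).card ≤ T.card := Finset.card_image_le
            omega
          obtain ⟨d, hd⟩ : (ℓ v \ T.image f).Nonempty := by
            rw [← Finset.card_pos]
            have := Finset.le_card_sdiff (T.image f) (ℓ v)
            rw [hℓv] at this ⊢
            omega
          obtain ⟨hd1, hd2⟩ := havoid d hd
          exact ⟨d, hd1, hd2⟩
  obtain ⟨σ, hσmem, hσprop⟩ := greedy Γ ℓ l hnd key
  refine ⟨σ, fun v => ?_, fun x y hadj => hσprop x y (hcover x) (hcover y) hadj⟩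
  have hv := hσmem v (hcover v)
  by_cases h : v = b ∨ v = c
  · rw [hℓ] at hv; simp only [if_pos h, Finset.mem_singleton] at hv
    rw [hv]; exact hc₀
  · rw [hℓ] at hv; simpa only [if_neg h] using hv

end GColor
section Ham
variable [Fintype W] [DecidableEq W] (Γ : SimpleGraph W) [DecidableRel Γ.Adj]

lemma getVert_inj {u w : W} (p : Γ.Walk u w) (hp : p.IsPath) :
    ∀ i j, i ≤ p.length → j ≤ p.length → p.getVert i = p.getVert j → i = j := by
  induction p with
  | nil =>
    intro i j hi hj _
    simp only [Walk.length_nil] at hi hj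
    omega
  | @cons x z y h q ih =>
    intro i j hi hj heq
    rw [Walk.cons_isPath_iff] at hp
    match i, j with
    | 0, 0 => rfl
    | 0, j + 1 =>
      exfalso
      apply hp.2
      rw [Walk.getVert_cons_succ] at heq
      rw [Walk.mem_support_iff_exists_getVert]
      refine ⟨j, ?_, ?_⟩
      · rw [← heq]; simp [Walk.getVert_zero]
      · simpa [Walk.length_cons] using hj
    | i + 1, 0 =>
      exfalso
      apply hp.2
      rw [Walk.getVert_cons_succ] at heq
      rw [Walk.mem_support_iff_exists_getVert]
      refine ⟨i, ?_, ?_⟩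
      · rw [heq]; simp [Walk.getVert_zero]
      · simpa [Walk.length_cons] using hi
    | i + 1, j + 1 =>
      rw [Walk.getVert_cons_succ, Walk.getVert_cons_succ] at heq
      have := ih hp.1 i j (by simpa [Walk.length_cons] using hi)
        (by simpa [Walk.length_cons] using hj) heq
      omega

lemma exists_max_path [Nonempty W] :
    ∃ (u w : W) (p : Γ.Walk u w), p.IsPath ∧ ∀ y, Γ.Adj u y → y ∈ p.support := by
  have main : ∀ (n : ℕ) (u w : W) (p : Γ.Walk u w), p.IsPath →
      Fintype.card W - p.length ≤ n →
      ∃ (u' : W) (p' : Γ.Walk u' w), p'.IsPath ∧ ∀ y, Γ.Adj u' y → y ∈ p'.support := by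
    intro n
    induction n with
    | zero =>
      intro u w p hp hn
      have := hp.length_lt
      omega
    | succ n ih =>
      intro u w p hp hn
      by_cases hall : ∀ y, Γ.Adj u y → y ∈ p.support
      · exact ⟨u, p, hp, hall⟩
      · push_neg at hall
        obtain ⟨y, hy, hyn⟩ := hall
        have hp' : (p.cons hy.symm).IsPath := hp.cons hyn
        exact ih y w (p.cons hy.symm) hp' (by rw [Walk.length_cons]; omega)
  obtain ⟨u⟩ := ‹Nonempty W›
  obtain ⟨u', p', h1, h2⟩ :=
    main (Fintype.card W) u u Walk.nil Walk.IsPath.nil (by simp)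
  exact ⟨u', u, p', h1, h2⟩

lemma colorable_of_even [DecidableEq α] (hcard : 3 ≤ Fintype.card W)
    (hconn : ∀ x y : W, RW Γ Set.univ x y)
    (hreg : ∀ v, Γ.degree v = 2) (heven : Even (Fintype.card W))
    (C : Finset α) (hC : C.card = 2) :
    ∃ σ : W → α, (∀ v, σ v ∈ C) ∧ ∀ ⦃x y⦄, Γ.Adj x y → σ x ≠ σ y := by
  classical
  have hne : Nonempty W := Fintype.card_pos_iff.1 (by omega)
  obtain ⟨u, w, p, hp, hmax⟩ := exists_max_path Γ
  set L := p.length with hL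
  have hdeg : ∀ v : W, (Γ.neighborFinset v).card = 2 := fun v => by
    rw [SimpleGraph.card_neighborFinset_eq_degree]; exact hreg v
  have hL1 : 1 ≤ L := by
    by_contra h
    push_neg at h
    obtain ⟨y, hy⟩ := Finset.card_pos.1 (show 0 < (Γ.neighborFinset u).card by rw [hdeg]; omega)
    rw [SimpleGraph.mem_neighborFinset] at hy
    obtain ⟨i, hgv, hi⟩ := Walk.mem_support_iff_exists_getVert.1 (hmax y hy)
    have : i = 0 := by omega
    subst this
    rw [Walk.getVert_zero] at hgv
    exact Γ.irrefl (hgv ▸ hy)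
  have hu₁adj : Γ.Adj u (p.getVert 1) := by
    have h := p.adj_getVert_succ (show 0 < p.length by rw [← hL]; omega)
    rwa [Walk.getVert_zero] at h
  obtain ⟨y, hy⟩ : ∃ y, y ∈ (Γ.neighborFinset u).erase (p.getVert 1) := by
    apply Finset.card_pos.1
    have h1 : p.getVert 1 ∈ Γ.neighborFinset u := by
      rw [SimpleGraph.mem_neighborFinset]; exact hu₁adj
    rw [Finset.card_erase_of_mem h1, hdeg]
    omega
  rw [Finset.mem_erase, SimpleGraph.mem_neighborFinset] at hy
  obtain ⟨hyu₁, hyadj⟩ := hy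
  obtain ⟨j, hjy, hj⟩ := Walk.mem_support_iff_exists_getVert.1 (hmax y hyadj)
  have hj0 : j ≠ 0 := by
    rintro rfl
    rw [Walk.getVert_zero] at hjy
    exact Γ.irrefl (hjy ▸ hyadj)
  have hclass : ∀ i, 0 < i → i < L →
      Γ.neighborFinset (p.getVert i) = {p.getVert (i - 1), p.getVert (i + 1)} := by
    intro i h0 hiL
    have h1 : Γ.Adj (p.getVert i) (p.getVert (i + 1)) := p.adj_getVert_succ hiL
    have h2 : Γ.Adj (p.getVert (i - 1)) (p.getVert i) := by
      have h3 := p.adj_getVert_succ (show i - 1 < L by omega)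
      rwa [show i - 1 + 1 = i by omega] at h3
    have hne' : p.getVert (i - 1) ≠ p.getVert (i + 1) := by
      intro h
      have := getVert_inj Γ p hp (i - 1) (i + 1) (by omega) (by omega) h
      omega
    have hsub : ({p.getVert (i - 1), p.getVert (i + 1)} : Finset W)
        ⊆ Γ.neighborFinset (p.getVert i) := by
      intro t ht
      rw [Finset.mem_insert, Finset.mem_singleton] at ht
      rcases ht with rfl | rfl
      · rw [SimpleGraph.mem_neighborFinset]; exact h2.symm
      · rw [SimpleGraph.mem_neighborFinset]; exact h1
    have hcards : (Γ.neighborFinset (p.getVert i)).card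
        ≤ ({p.getVert (i - 1), p.getVert (i + 1)} : Finset W).card := by
      rw [Finset.card_insert_of_notMem (by simpa using hne'), Finset.card_singleton, hdeg]
    exact (Finset.eq_of_subset_of_card_le hsub hcards).symm
  have hjL : j = L := by
    by_contra hjne
    have h0 : 0 < j := Nat.pos_of_ne_zero hj0
    have hjlt : j < L := lt_of_le_of_ne hj hjne
    have hcl := hclass j h0 hjlt
    have humem : u ∈ Γ.neighborFinset (p.getVert j) := by
      rw [hjy, SimpleGraph.mem_neighborFinset]; exact hyadj.symm
    rw [hcl, Finset.mem_insert, Finset.mem_singleton] at humem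
    rcases humem with h | h
    · have h' := getVert_inj Γ p hp 0 (j - 1) (by omega) (by omega)
        (by rw [Walk.getVert_zero]; exact h)
      have hj1 : j = 1 := by omega
      apply hyu₁
      rw [← hjy, hj1]
    · have h' := getVert_inj Γ p hp 0 (j + 1) (by omega) (by omega)
        (by rw [Walk.getVert_zero]; exact h)
      omega
  have hyw : y = w := by rw [← hjy, hjL, Walk.getVert_length]
  have huw : Γ.Adj u w := hyw ▸ hyadj
  have hL2 : 2 ≤ L := by
    by_contra hcon
    have hLeq : L = 1 := by omega
    apply hyu₁
    rw [← hjy, hjL, hLeq]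
  have hnbru : Γ.neighborFinset u = {p.getVert 1, w} := by
    have hne' : p.getVert 1 ≠ w := by
      intro h
      have h2 : p.getVert 1 = p.getVert p.length := by rw [p.getVert_length]; exact h
      have := getVert_inj Γ p hp 1 p.length (by omega) (le_refl _) h2
      omega
    have hsub : ({p.getVert 1, w} : Finset W) ⊆ Γ.neighborFinset u := by
      intro t ht
      rw [Finset.mem_insert, Finset.mem_singleton] at ht
      rcases ht with rfl | rfl
      · rw [SimpleGraph.mem_neighborFinset]; exact hu₁adj
      · rw [SimpleGraph.mem_neighborFinset]; exact huw
    have hcards : (Γ.neighborFinset u).card ≤ ({p.getVert 1, w} : Finset W).card := by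
      rw [Finset.card_insert_of_notMem (by simpa using hne'), Finset.card_singleton, hdeg]
    exact (Finset.eq_of_subset_of_card_le hsub hcards).symm
  have hnbrw : Γ.neighborFinset w = {p.getVert (L - 1), u} := by
    have hadjw : Γ.Adj (p.getVert (L - 1)) w := by
      have h3 := p.adj_getVert_succ (show L - 1 < L by omega)
      rwa [show L - 1 + 1 = L by omega, p.getVert_length] at h3
    have hne' : p.getVert (L - 1) ≠ u := by
      intro h
      have h2 : p.getVert (L - 1) = p.getVert 0 := by rw [p.getVert_zero]; exact h
      have := getVert_inj Γ p hp (L - 1) 0 (by omega) (by omega) h2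
      omega
    have hsub : ({p.getVert (L - 1), u} : Finset W) ⊆ Γ.neighborFinset w := by
      intro t ht
      rw [Finset.mem_insert, Finset.mem_singleton] at ht
      rcases ht with rfl | rfl
      · rw [SimpleGraph.mem_neighborFinset]; exact hadjw.symm
      · rw [SimpleGraph.mem_neighborFinset]; exact huw.symm
    have hcards : (Γ.neighborFinset w).card ≤ ({p.getVert (L - 1), u} : Finset W).card := by
      rw [Finset.card_insert_of_notMem (by simpa using hne'), Finset.card_singleton, hdeg]
    exact (Finset.eq_of_subset_of_card_le hsub hcards).symm
  have hclosed : ∀ x ∈ p.support, ∀ y', Γ.Adj x y' → y' ∈ p.support := by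
    intro x hx y' hadj
    obtain ⟨i, hgv, hi⟩ := Walk.mem_support_iff_exists_getVert.1 hx
    subst hgv
    have hy'mem : y' ∈ Γ.neighborFinset (p.getVert i) := by
      rw [SimpleGraph.mem_neighborFinset]; exact hadj
    rcases Nat.eq_zero_or_pos i with rfl | h0
    · rw [Walk.getVert_zero, hnbru, Finset.mem_insert, Finset.mem_singleton] at hy'mem
      rcases hy'mem with rfl | rfl
      · exact Walk.mem_support_iff_exists_getVert.2 ⟨1, rfl, by omega⟩
      · exact p.end_mem_support
    rcases eq_or_ne i L with rfl | hiL
    · rw [p.getVert_length, hnbrw, Finset.mem_insert, Finset.mem_singleton] at hy'mem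
      rcases hy'mem with rfl | rfl
      · exact Walk.mem_support_iff_exists_getVert.2 ⟨L - 1, rfl, by omega⟩
      · exact p.start_mem_support
    · rw [hclass i h0 (lt_of_le_of_ne hi hiL), Finset.mem_insert, Finset.mem_singleton]
        at hy'mem
      rcases hy'mem with rfl | rfl
      · exact Walk.mem_support_iff_exists_getVert.2 ⟨i - 1, rfl, by omega⟩
      · exact Walk.mem_support_iff_exists_getVert.2 ⟨i + 1, rfl, by omega⟩
  have hspan : ∀ x : W, x ∈ p.support := by
    intro x
    by_contra hxn
    obtain ⟨q, _⟩ := hconn u x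
    obtain ⟨a', b', hab, ha, hb, _, _⟩ :=
      crossing (C := {t | t ∈ p.support}) q (by simp [p.start_mem_support]) (by simpa using hxn)
    exact hb (hclosed a' ha b' hab)
  have hcardW : Fintype.card W = L + 1 := by
    have h1 : p.support.toFinset = Finset.univ :=
      Finset.eq_univ_iff_forall.2 (fun x => List.mem_toFinset.2 (hspan x))
    have h2 : p.support.toFinset.card = p.support.length :=
      List.toFinset_card_of_nodup hp.support_nodup
    have h3 := p.length_support
    have h4 : Finset.univ.card = Fintype.card W := Finset.card_univ
    rw [h1] at h2
    omega
  -- index function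
  have hidx : ∀ x : W, ∃ i, p.getVert i = x ∧ i ≤ L :=
    fun x => Walk.mem_support_iff_exists_getVert.1 (hspan x)
  set idx : W → ℕ := fun x => (hidx x).choose with hidxdef
  have hidx1 : ∀ x, p.getVert (idx x) = x := fun x => (hidx x).choose_spec.1
  have hidx2 : ∀ x, idx x ≤ L := fun x => (hidx x).choose_spec.2
  have hidx3 : ∀ i, i ≤ L → idx (p.getVert i) = i := by
    intro i hi
    exact getVert_inj Γ p hp _ i (hidx2 _) hi (hidx1 _)
  obtain ⟨c₁, c₂, hc12, hCeq⟩ := Finset.card_eq_two.1 hC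
  have hLodd : ¬ Even L := by
    intro h
    rw [hcardW, Nat.even_add_one] at heven
    exact heven h
  have hgvL : p.getVert L = w := by rw [hL]; exact p.getVert_length
  have hgv0 : p.getVert 0 = u := p.getVert_zero
  have hidxw : idx w = L := by rw [← hgvL]; exact hidx3 L (le_refl _)
  have hidxu : idx u = 0 := by rw [← hgv0]; exact hidx3 0 (by omega)
  set σ : W → α := fun x => if Even (idx x) then c₁ else c₂ with hσ
  refine ⟨σ, ?_, ?_⟩
  · intro v
    by_cases h : Even (idx v) <;> simp [hσ, h, hCeq]
  · intro x y' hadj heq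
    have hxmem : y' ∈ Γ.neighborFinset (p.getVert (idx x)) := by
      rw [hidx1, SimpleGraph.mem_neighborFinset]; exact hadj
    have hkey : (Even (idx x) ↔ ¬ Even (idx y')) := by
      rcases Nat.eq_zero_or_pos (idx x) with hx0 | hx0
      · rw [hx0] at hxmem ⊢
        rw [hgv0, hnbru, Finset.mem_insert, Finset.mem_singleton] at hxmem
        rcases hxmem with h | h
        · rw [h, hidx3 1 (by omega)]
          decide
        · rw [h, hidxw]
          simp [hLodd]
      · rcases eq_or_ne (idx x) L with hxL | hxL
        · rw [hxL] at hxmem ⊢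
          rw [hgvL, hnbrw, Finset.mem_insert, Finset.mem_singleton] at hxmem
          rcases hxmem with h | h
          · rw [h, hidx3 (L - 1) (by omega)]
            rw [Nat.even_iff, Nat.even_iff]
            omega
          · rw [h, hidxu]
            simp [hLodd]
        · have hlt : idx x < L := lt_of_le_of_ne (hidx2 x) hxL
          rw [hclass (idx x) hx0 hlt, Finset.mem_insert, Finset.mem_singleton] at hxmem
          rcases hxmem with h | h
          · rw [h, hidx3 (idx x - 1) (by omega)]
            rw [Nat.even_iff, Nat.even_iff]
            omega
          · rw [h, hidx3 (idx x + 1) (by omega)]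
            rw [Nat.even_iff, Nat.even_iff]
            omega
    by_cases hx : Even (idx x)
    · have hy'' : ¬ Even (idx y') := hkey.1 hx
      simp only [hσ, if_pos hx, if_neg hy''] at heq
      exact hc12 heq
    · have hy'' : Even (idx y') := by
        by_contra hcon
        exact hx (hkey.2 hcon)
      simp only [hσ, if_neg hx, if_pos hy''] at heq
      exact hc12 heq.symm

end Ham
theorem phase2 {W' : Type*} [Fintype W'] [DecidableEq W'] {α' : Type*} [DecidableEq α']
    (Γ : SimpleGraph W') [DecidableRel Γ.Adj]
    (tf : Γ.CliqueFree 3) (hcard : 3 ≤ Fintype.card W')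
    (h2 : ∀ (u x y : W'), x ≠ u → y ≠ u → RW Γ {u}ᶜ x y)
    (ℓ : W' → Finset α') (hdeg : ∀ v, Γ.degree v ≤ (ℓ v).card)
    (hnc : ¬ ∃ σ : W' → α', (∀ v, σ v ∈ ℓ v) ∧ ∀ ⦃u v⦄, Γ.Adj u v → σ u ≠ σ v) :
    (∀ v, Γ.degree v = 2) ∧ Odd (Fintype.card W') := by
  classical
  have hcolor : ∀ (u v : W'), Γ.Adj u v → ∀ c ∈ ℓ u, c ∈ ℓ v := by
    intro u v hadj c hcu
    by_contra hcv
    exact hnc (colorable_of_nonuniform Γ h2 u v hadj ℓ hdeg c hcu hcv)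
  have hedge : ∀ u v, Γ.Adj u v → ℓ u = ℓ v := fun u v h =>
    Finset.Subset.antisymm (fun c hc => hcolor u v h c hc) (fun c hc => hcolor v u h.symm c hc)
  have hconnuniv : ∀ x y, RW Γ Set.univ x y := conn_univ Γ hcard h2
  obtain ⟨v₀⟩ : Nonempty W' := Fintype.card_pos_iff.1 (by omega)
  have hconst : ∀ v, ℓ v = ℓ v₀ := by
    intro v
    obtain ⟨p, -⟩ := hconnuniv v v₀
    induction p with
    | nil => rfl
    | cons h q ih => exact (hedge _ _ h).trans ih
  have hreg : ∀ v, Γ.degree v = (ℓ v₀).card := by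
    intro v
    have hle : Γ.degree v ≤ (ℓ v₀).card := hconst v ▸ hdeg v
    rcases eq_or_lt_of_le hle with h | hlt
    · exact h
    · exfalso
      have hconn' : ∀ w ∈ Finset.univ, RW Γ ↑(Finset.univ : Finset W') w v := by
        intro w _
        rw [Finset.coe_univ]
        exact hconnuniv w v
      have hd : ∀ w ∈ Finset.univ,
          ((Γ.neighborFinset w) ∩ Finset.univ).card ≤ (ℓ w).card := by
        intro w _
        rw [Finset.inter_univ, SimpleGraph.card_neighborFinset_eq_degree]
        exact hdeg w
      have hsur : ((Γ.neighborFinset v) ∩ Finset.univ).card < (ℓ v).card := by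
        rw [Finset.inter_univ, SimpleGraph.card_neighborFinset_eq_degree, hconst v]
        exact hlt
      obtain ⟨σ, hmem, hprop⟩ :=
        colorable_on_of_surplus Γ Finset.univ v (Finset.mem_univ v) hconn' ℓ hd hsur
      exact hnc ⟨σ, fun w => hmem w (Finset.mem_univ w),
        fun x y hadj => hprop x y (Finset.mem_univ x) (Finset.mem_univ y) hadj⟩
  have hd2 : 2 ≤ (ℓ v₀).card := by
    obtain ⟨z₁, z₂, h1, h2', hne12⟩ := exists_two_nbrs Γ hcard h2 v₀
    rw [← hreg v₀, ← SimpleGraph.card_neighborFinset_eq_degree]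
    exact Finset.one_lt_card.2 ⟨z₁, by rwa [SimpleGraph.mem_neighborFinset], z₂,
      by rwa [SimpleGraph.mem_neighborFinset], fun h => hne12 h⟩
  have hC2 : (ℓ v₀).card = 2 := by
    by_contra hne2
    have h3 : 3 ≤ (ℓ v₀).card := by omega
    have hmin : ∀ v, 3 ≤ Γ.degree v := fun v => (hreg v).symm ▸ h3
    obtain ⟨a, b, c, hab, hac, hbc, hnadj, hconnbc⟩ := gadget Γ tf hcard h2 hmin
    obtain ⟨σ, hmem, hprop⟩ :=
      colorable_of_gadget Γ (ℓ v₀) h3 hreg a b c hab hac hbc hnadj hconnbc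
    exact hnc ⟨σ, fun v => (hconst v).symm ▸ hmem v, hprop⟩
  refine ⟨fun v => by rw [hreg v, hC2], ?_⟩
  by_contra hodd
  have heven : Even (Fintype.card W') := Nat.not_odd_iff_even.1 hodd
  obtain ⟨σ, hmem, hprop⟩ := colorable_of_even Γ hcard hconnuniv
    (fun v => by rw [hreg v, hC2]) heven (ℓ v₀) hC2
  exact hnc ⟨σ, fun v => (hconst v).symm ▸ hmem v, hprop⟩
end OC

open OC in
theorem main_glue {V α : Type*} [Fintype V]
    (G : SimpleGraph V) [DecidableRel G.Adj]
    (htf : G.CliqueFree 3)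
    (S : G.Subgraph) (L : V → Finset α)
    (H : G.Subgraph)
    (hdisj : H.verts ∩ S.verts = ∅)
    (hcard3 : 3 ≤ H.verts.ncard)
    (hdel : ∀ v ∈ H.verts, ((H.deleteVerts {v}).coe).Connected)
    (hdeg : ∀ v ∈ H.verts, G.degree v ≤ (L v).card)
    (hcrit : IsCriticalIn (⊤ : G.Subgraph) S L) :
    H.IsInduced ∧ H.coe.Connected ∧ (∀ v ∈ H.verts, (H.neighborSet v).ncard = 2) ∧
      Odd H.verts.ncard := by
  classical
  haveI : Fintype ↥H.verts := H.verts.toFinite.fintype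
  set Γ : SimpleGraph ↥H.verts := G.induce H.verts with hΓ
  haveI hdecΓ : DecidableRel Γ.Adj := fun a b => decidable_of_iff (G.Adj ↑a ↑b) Iff.rfl
  have hΓadj : ∀ a b : ↥H.verts, Γ.Adj a b ↔ G.Adj ↑a ↑b := fun a b => Iff.rfl
  have hcardW : Fintype.card ↥H.verts = H.verts.ncard := by
    rw [← Nat.card_coe_set_eq, Nat.card_eq_fintype_card]
  have hcard : 3 ≤ Fintype.card ↥H.verts := by rw [hcardW]; exact hcard3
  have tfΓ : Γ.CliqueFree 3 := by
    intro t ht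
    rw [SimpleGraph.is3Clique_iff] at ht
    obtain ⟨a, b, c, h1, h2, h3, rfl⟩ := ht
    refine htf {↑a, ↑b, ↑c} (SimpleGraph.is3Clique_triple_iff.2
      ⟨(hΓadj a b).1 h1, (hΓadj a c).1 h2, (hΓadj b c).1 h3⟩)
  -- transported 2-connectivity
  have h2 : ∀ (u x y : ↥H.verts), x ≠ u → y ≠ u → RW Γ {u}ᶜ x y := by
    intro u x y hxu hyu
    have hconn := hdel ↑u u.2
    have hxmem : (↑x : V) ∈ (H.deleteVerts {(↑u : V)}).verts :=
      ⟨x.2, fun h => hxu (Subtype.ext h)⟩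
    have hymem : (↑y : V) ∈ (H.deleteVerts {(↑u : V)}).verts :=
      ⟨y.2, fun h => hyu (Subtype.ext h)⟩
    obtain ⟨p⟩ := hconn.preconnected ⟨↑x, hxmem⟩ ⟨↑y, hymem⟩
    let f : (H.deleteVerts {(↑u : V)}).coe →g Γ :=
      ⟨fun a => ⟨↑a, a.2.1⟩, fun {a b} hab => (hΓadj _ _).2 ((H.deleteVerts _).coe_adj_sub a b hab)⟩
    refine ⟨p.map f, ?_⟩
    intro t ht
    rw [SimpleGraph.Walk.support_map] at ht
    obtain ⟨a, _, rfl⟩ := List.mem_map.1 ht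
    simp only [Set.mem_compl_iff, Set.mem_singleton_iff]
    intro h
    have hval : (↑a : V) = ↑u := congrArg Subtype.val h
    exact a.2.2 hval
  -- every vertex has an H-neighbour avoiding a given vertex
  have hstep : ∀ (u : V), u ∈ H.verts → ∀ (x y : ↥H.verts), (↑x : V) ≠ u → (↑y : V) ≠ u →
      x ≠ y → ∃ t, H.Adj ↑x t ∧ t ≠ u := by
    intro u hu x y hxu hyu hxy
    have hconn := hdel u hu
    obtain ⟨p⟩ := hconn.preconnected ⟨↑x, ⟨x.2, hxu⟩⟩ ⟨↑y, ⟨y.2, hyu⟩⟩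
    have hnn : ¬ p.Nil := by
      apply SimpleGraph.Walk.not_nil_of_ne
      intro h
      apply hxy
      have h' := congrArg (fun (t : ↥(H.deleteVerts {u}).verts) => (↑t : V)) h
      exact Subtype.ext h'
    have hadj := SimpleGraph.Walk.adj_snd hnn
    have hD : (H.deleteVerts {u}).Adj ↑(⟨↑x, ⟨x.2, hxu⟩⟩ : ↥(H.deleteVerts {u}).verts)
        ↑(p.getVert 1) := hadj
    rw [SimpleGraph.Subgraph.deleteVerts_adj] at hD
    exact ⟨↑(p.getVert 1), hD.2.2.2.2, fun h => hD.2.2.2.1 (by simp [h])⟩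
  have L1 : ∀ x : ↥H.verts, ∃ t, H.Adj ↑x t := by
    intro x
    obtain ⟨u', hux, _⟩ := exists_third hcard x x
    obtain ⟨z', hz1, hz2⟩ := exists_third hcard x u'
    obtain ⟨t, ht, _⟩ := hstep ↑u' u'.2 x z'
      (fun h => hux (Subtype.ext h.symm))
      (fun h => hz2 (Subtype.ext h)) (Ne.symm hz1)
    exact ⟨t, ht⟩
  have htwo : ∀ (x : ↥H.verts) (u : V), ∃ z, H.Adj ↑x z ∧ z ≠ u := by
    intro x u
    by_cases hu : u ∈ H.verts
    · rcases eq_or_ne (↑x : V) u with hxu | hxu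
      · obtain ⟨t, ht⟩ := L1 x
        exact ⟨t, ht, fun h => (ht.adj_sub).ne' (by rw [h, ← hxu])⟩
      · obtain ⟨y', hy1, hy2⟩ := exists_third hcard x (⟨u, hu⟩ : ↥H.verts)
        exact hstep u hu x y' hxu (fun h => hy2 (Subtype.ext h)) (Ne.symm hy1)
    · obtain ⟨t, ht⟩ := L1 x
      exact ⟨t, ht, fun h => hu (h ▸ H.edge_vert ht.symm)⟩
  -- an edge of H
  obtain ⟨x₀⟩ : Nonempty ↥H.verts := Fintype.card_pos_iff.1 (by omega)
  obtain ⟨y₀v, hy₀⟩ := L1 x₀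
  have hy₀mem : y₀v ∈ H.verts := H.edge_vert hy₀.symm
  -- criticality applied to G minus the edge x₀y₀
  set K : G.Subgraph :=
    { verts := Set.univ
      Adj := fun p q => G.Adj p q ∧
        ¬((p = ↑x₀ ∧ q = y₀v) ∨ (p = y₀v ∧ q = ↑x₀))
      adj_sub := fun h => h.1
      edge_vert := fun _ => Set.mem_univ _
      symm := by
        refine ⟨fun a b h => ?_⟩
        exact ⟨h.1.symm, fun hc => h.2 (by tauto)⟩ } with hK
  have hSK : S ≤ K := by
    constructor
    · intro a _; exact Set.mem_univ a
    · intro a b hab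
      refine ⟨S.adj_sub hab, ?_⟩
      rintro (⟨ha, -⟩ | ⟨ha, -⟩)
      · exact Set.eq_empty_iff_forall_notMem.1 hdisj ↑x₀
          ⟨x₀.2, by rw [← ha]; exact S.edge_vert hab⟩
      · exact Set.eq_empty_iff_forall_notMem.1 hdisj y₀v
          ⟨hy₀mem, by rw [← ha]; exact S.edge_vert hab⟩
  have hKne : K ≠ ⊤ := by
    intro h
    have : K.Adj ↑x₀ y₀v := by
      rw [h, SimpleGraph.Subgraph.top_adj]
      exact hy₀.adj_sub
    exact this.2 (Or.inl ⟨rfl, rfl⟩)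
  obtain ⟨ψ, hψ, hext, hnot⟩ := hcrit K hSK le_top hKne
  obtain ⟨φ, hφS, hφL, hφprop⟩ := hext
  -- the reduced lists on H
  set ℓ : ↥H.verts → Finset α := fun v =>
    (L ↑v) \ (((G.neighborFinset ↑v).filter (fun w => w ∉ H.verts)).image φ) with hℓ
  have hdeg_eq : ∀ v : ↥H.verts,
      Γ.degree v = ((G.neighborFinset ↑v).filter (fun w => w ∈ H.verts)).card := by
    intro v
    rw [← SimpleGraph.card_neighborFinset_eq_degree]
    refine Finset.card_bij (fun w _ => ↑w) ?_ ?_ ?_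
    · intro a ha
      rw [SimpleGraph.mem_neighborFinset] at ha
      rw [Finset.mem_filter, SimpleGraph.mem_neighborFinset]
      exact ⟨(hΓadj v a).1 ha, a.2⟩
    · intro a _ b _ h
      exact Subtype.ext h
    · intro b hb
      rw [Finset.mem_filter, SimpleGraph.mem_neighborFinset] at hb
      exact ⟨⟨b, hb.2⟩, by rw [SimpleGraph.mem_neighborFinset]; exact (hΓadj _ _).2 hb.1, rfl⟩
  have hdegℓ : ∀ v : ↥H.verts, Γ.degree v ≤ (ℓ v).card := by
    intro v
    have h1 := Finset.le_card_sdiff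
      (((G.neighborFinset ↑v).filter (fun w => w ∉ H.verts)).image φ) (L ↑v)
    have h2 : (((G.neighborFinset ↑v).filter (fun w => w ∉ H.verts)).image φ).card
        ≤ ((G.neighborFinset ↑v).filter (fun w => w ∉ H.verts)).card :=
      Finset.card_image_le
    have h3 := hdeg ↑v v.2
    have h4 : ((G.neighborFinset ↑v).filter (fun w => w ∈ H.verts)).card
        + ((G.neighborFinset ↑v).filter (fun w => w ∉ H.verts)).card
        = (G.neighborFinset ↑v).card :=
      Finset.card_filter_add_card_filter_not _
    have h5 : (G.neighborFinset ↑v).card = G.degree ↑v :=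
      SimpleGraph.card_neighborFinset_eq_degree G ↑v
    have h6 := hdeg_eq v
    have h7 : (ℓ v) = (L ↑v) \ (((G.neighborFinset ↑v).filter
        (fun w => w ∉ H.verts)).image φ) := rfl
    rw [h7]
    omega
  have hnc : ¬ ∃ σ : ↥H.verts → α, (∀ v, σ v ∈ ℓ v) ∧
      ∀ ⦃u v⦄, Γ.Adj u v → σ u ≠ σ v := by
    rintro ⟨σ, hσmem, hσprop⟩
    apply hnot
    refine ⟨fun w => if h : w ∈ H.verts then σ ⟨w, h⟩ else φ w, ?_, ?_, ?_⟩
    · intro w hwS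
      have hwH : w ∉ H.verts := fun h =>
        Set.eq_empty_iff_forall_notMem.1 hdisj w ⟨h, hwS⟩
      show (if h : w ∈ H.verts then σ ⟨w, h⟩ else φ w) = ψ w
      rw [dif_neg hwH]
      exact hφS w hwS
    · intro w _ hwS
      show (if h : w ∈ H.verts then σ ⟨w, h⟩ else φ w) ∈ L w
      by_cases h : w ∈ H.verts
      · rw [dif_pos h]
        have := hσmem ⟨w, h⟩
        simp only [hℓ, Finset.mem_sdiff] at this
        exact this.1
      · rw [dif_neg h]
        exact hφL w (Set.mem_univ w) hwS
    · intro p q hadj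
      rw [SimpleGraph.Subgraph.top_adj] at hadj
      show (if h : p ∈ H.verts then σ ⟨p, h⟩ else φ p)
        ≠ (if h : q ∈ H.verts then σ ⟨q, h⟩ else φ q)
      by_cases hp : p ∈ H.verts <;> by_cases hq : q ∈ H.verts
      · rw [dif_pos hp, dif_pos hq]
        exact hσprop ((hΓadj ⟨p, hp⟩ ⟨q, hq⟩).2 hadj)
      · rw [dif_pos hp, dif_neg hq]
        intro heq
        have hmem := hσmem ⟨p, hp⟩
        simp only [hℓ, Finset.mem_sdiff] at hmem
        apply hmem.2
        refine Finset.mem_image.2 ⟨q, ?_, heq.symm⟩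
        rw [Finset.mem_filter, SimpleGraph.mem_neighborFinset]
        exact ⟨hadj, hq⟩
      · rw [dif_neg hp, dif_pos hq]
        intro heq
        have hmem := hσmem ⟨q, hq⟩
        simp only [hℓ, Finset.mem_sdiff] at hmem
        apply hmem.2
        refine Finset.mem_image.2 ⟨p, ?_, heq⟩
        rw [Finset.mem_filter, SimpleGraph.mem_neighborFinset]
        exact ⟨hadj.symm, hp⟩
      · rw [dif_neg hp, dif_neg hq]
        apply hφprop
        refine ⟨hadj, ?_⟩
        rintro (⟨ha, -⟩ | ⟨ha, -⟩)
        · exact hp (by rw [ha]; exact x₀.2)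
        · exact hp (by rw [ha]; exact hy₀mem)
  obtain ⟨hdeg2, hodd⟩ := phase2 Γ tfΓ hcard h2 ℓ hdegℓ hnc
  -- H is the full induced subgraph
  have hfull : ∀ (x y : ↥H.verts), G.Adj ↑x ↑y → H.Adj ↑x ↑y := by
    intro x y hadj
    by_contra hnadj
    obtain ⟨z₁, hz₁⟩ := L1 x
    obtain ⟨z₂, hz₂, hz₂ne⟩ := htwo x z₁
    have hz₁m : z₁ ∈ H.verts := H.edge_vert hz₁.symm
    have hz₂m : z₂ ∈ H.verts := H.edge_vert hz₂.symm
    have hy1 : z₁ ≠ (↑y : V) := fun h => hnadj (h ▸ hz₁)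
    have hy2 : z₂ ≠ (↑y : V) := fun h => hnadj (h ▸ hz₂)
    have h3sub : ({⟨z₁, hz₁m⟩, ⟨z₂, hz₂m⟩, y} : Finset ↥H.verts) ⊆ Γ.neighborFinset x := by
      intro t ht
      rw [Finset.mem_insert, Finset.mem_insert, Finset.mem_singleton] at ht
      rw [SimpleGraph.mem_neighborFinset]
      rcases ht with rfl | rfl | rfl
      · exact (hΓadj _ _).2 hz₁.adj_sub
      · exact (hΓadj _ _).2 hz₂.adj_sub
      · exact (hΓadj _ _).2 hadj
    have hcard3' : ({⟨z₁, hz₁m⟩, ⟨z₂, hz₂m⟩, y} : Finset ↥H.verts).card = 3 := by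
      rw [Finset.card_insert_of_notMem, Finset.card_insert_of_notMem,
        Finset.card_singleton]
      · rw [Finset.mem_singleton]
        exact fun h => hy2 (congrArg Subtype.val h)
      · rw [Finset.mem_insert, Finset.mem_singleton]
        rintro (h | h)
        · exact hz₂ne.symm (congrArg Subtype.val h)
        · exact hy1 (congrArg Subtype.val h)
    have hle := Finset.card_le_card h3sub
    rw [hcard3', SimpleGraph.card_neighborFinset_eq_degree, hdeg2 x] at hle
    omega
  refine ⟨?_, ?_, ?_, ?_⟩
  · intro v hv w hw hadj
    exact hfull ⟨v, hv⟩ ⟨w, hw⟩ hadj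
  · rw [SimpleGraph.connected_iff]
    refine ⟨?_, ⟨x₀⟩⟩
    intro a b
    obtain ⟨u', hua, hub⟩ := exists_third hcard a b
    have hconn := hdel ↑u' u'.2
    have hamem : (↑a : V) ∈ (H.deleteVerts {(↑u' : V)}).verts :=
      ⟨a.2, fun h => hua (Subtype.ext h.symm)⟩
    have hbmem : (↑b : V) ∈ (H.deleteVerts {(↑u' : V)}).verts :=
      ⟨b.2, fun h => hub (Subtype.ext h.symm)⟩
    have hr := hconn.preconnected ⟨↑a, hamem⟩ ⟨↑b, hbmem⟩
    let g : (H.deleteVerts {(↑u' : V)}).coe →g H.coe :=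
      ⟨fun t => ⟨↑t, t.2.1⟩, fun {s t} hst => by
        have : (H.deleteVerts {(↑u' : V)}).Adj ↑s ↑t := hst
        rw [SimpleGraph.Subgraph.deleteVerts_adj] at this
        exact this.2.2.2.2⟩
    exact hr.map g
  · intro v hv
    have hset : H.neighborSet v = Subtype.val '' (Γ.neighborSet ⟨v, hv⟩) := by
      ext t
      simp only [SimpleGraph.Subgraph.mem_neighborSet, Set.mem_image,
        SimpleGraph.mem_neighborSet]
      constructor
      · intro h
        exact ⟨⟨t, H.edge_vert h.symm⟩, (hΓadj _ _).2 h.adj_sub, rfl⟩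
      · rintro ⟨t', hadj', rfl⟩
        exact hfull ⟨v, hv⟩ t' ((hΓadj _ _).1 hadj')
    rw [hset, Set.ncard_image_of_injective _ Subtype.val_injective]
    have hns : (Γ.neighborSet ⟨v, hv⟩).ncard = Γ.degree ⟨v, hv⟩ := by
      rw [← Nat.card_coe_set_eq, Nat.card_eq_fintype_card]
      exact SimpleGraph.card_neighborSet_eq_degree Γ ⟨v, hv⟩
    rw [hns, hdeg2]
  · rw [← hcardW]
    exact hodd

/-- Let `G` be a finite simple triangle-free graph, `S` a subgraph of `G`, and `L` an
assignment of lists to the vertices of `V(G) \ V(S)`.  Let `H` be a 2-connected subgraph of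
`G` with `V(H) ∩ V(S) = ∅` and `|L(v)| ≥ deg_G(v)` for each `v ∈ V(H)`.  If `G` is
`S`-critical with respect to `L`, then `H` is an induced odd cycle in `G`. -/
theorem twoConnected_subgraph_of_critical {V α : Type*} [Fintype V]
    (G : SimpleGraph V) [DecidableRel G.Adj]
    (htf : G.CliqueFree 3)
    (S : G.Subgraph) (L : V → Finset α)
    (H : G.Subgraph)
    (hdisj : H.verts ∩ S.verts = ∅)
    (h2conn : Subgraph.TwoConnected H)
    (hdeg : ∀ v ∈ H.verts, G.degree v ≤ (L v).card)
    (hcrit : IsCriticalIn (⊤ : G.Subgraph) S L) :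
    Subgraph.IsInducedOddCycle H := by
  obtain ⟨hcard3, hdel⟩ := h2conn
  obtain ⟨h1, h2, h3, h4⟩ := main_glue G htf S L H hdisj hcard3 hdel hdeg hcrit
  exact ⟨h1, h2, h3, h4⟩
end

section
/- Let H be a finite simple graph, S a subgraph of H, and L an assignment of lists of colors to the vertices of V(H) \ V(S). Then there exists a subgraph G of H with S ⊆ G such that G is S-critical with respect to the restriction of L, and such that every proper coloring of S extends to an L-coloring of H if and only if it extends to an L-coloring of G. -/
open SimpleGraph

lemma extends_anti {V α : Type*} {G : SimpleGraph V} {S K K' : G.Subgraph}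
    {L : V → Finset α} {ψ : V → α} (h : K ≤ K') (hext : ExtendsToColoring S K' L ψ) :
    ExtendsToColoring S K L ψ := by
  obtain ⟨φ, h1, h2, h3⟩ := hext
  exact ⟨φ, h1, fun v hv hvs => h2 v (h.1 hv) hvs, fun u v huv => h3 (h.2 huv)⟩

/-- Every finite simple graph `H` with a subgraph `S` and a list assignment `L` on
`V(H) \ V(S)` has an `S`-skeleton: a subgraph `G ⊇ S` that is `S`-critical with respect to
(the restriction of) `L` and such that a proper coloring of `S` extends to an `L`-coloring
of `H` if and only if it extends to an `L`-coloring of `G`. -/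
theorem exists_skeleton {V α : Type*} [Fintype V]
    (H : SimpleGraph V) (S : H.Subgraph) (L : V → Finset α) :
    ∃ G : H.Subgraph, S ≤ G ∧ IsCriticalIn G S L ∧
      ∀ ψ : V → α, ProperOn S ψ →
        (ExtendsToColoring S (⊤ : H.Subgraph) L ψ ↔ ExtendsToColoring S G L ψ) := by
  classical
  have hfin : Finite H.Subgraph := by
    apply Finite.of_injective (fun K => (K.verts, K.Adj))
    intro K K' h
    simp only [Prod.mk.injEq] at h
    exact SimpleGraph.Subgraph.ext h.1 h.2
  have hwf : WellFoundedLT H.Subgraph := Finite.to_wellFoundedLT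
  set P : H.Subgraph → Prop := fun K => S ≤ K ∧
    ∀ ψ : V → α, ProperOn S ψ → ExtendsToColoring S K L ψ →
      ExtendsToColoring S (⊤ : H.Subgraph) L ψ with hP
  have hPtop : P ⊤ := ⟨le_top, fun ψ _ h => h⟩
  obtain ⟨G, hG, hmin⟩ : ∃ G, P G ∧ ∀ K, K < G → ¬ P K := by
    have := hwf.wf.has_min {K | P K} ⟨⊤, hPtop⟩
    obtain ⟨G, hG, hm⟩ := this
    exact ⟨G, hG, fun K hK hPK => hm K hPK hK⟩
  refine ⟨G, hG.1, ?_, ?_⟩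
  · intro K hSK hKG hne
    have hKlt : K < G := lt_of_le_of_ne hKG hne
    have := hmin K hKlt
    simp only [hP] at this
    push_neg at this
    obtain ⟨ψ, hψp, hψK, hψtop⟩ := this hSK
    refine ⟨ψ, hψp, hψK, fun hG' => hψtop (hG.2 ψ hψp hG')⟩
  · intro ψ hψ
    exact ⟨fun h => extends_anti le_top h, hG.2 ψ hψ⟩
end

section
/- Let w : ℤ≥0 → ℝ be the function defined by w(x) = 0 for x ≤ 4, w(5) = 1/7, and w(x) = x − 5 for x ≥ 6. If positive integers x, y, z, m satisfy x + y = z and x ≥ m and y ≥ m, then w(x) + w(y) ≤ w(z − m) + w(m). -/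
/-- The weight function `w : ℤ≥0 → ℝ` defined by `w x = 0` for `x ≤ 4`,
`w 5 = 1/7`, and `w x = x - 5` for `x ≥ 6`. -/
noncomputable def weightFn (x : ℕ) : ℝ :=
  if x ≤ 4 then 0 else if x = 5 then 1 / 7 else (x : ℝ) - 5

lemma weightFn_step (a b : ℕ) (ha : 1 ≤ a) (hab : a ≤ b + 1) :
    weightFn a + weightFn b ≤ weightFn (a - 1) + weightFn (b + 1) := by
  unfold weightFn
  split_ifs <;> try (exfalso; omega)
  all_goals (rify [ha] at *; linarith)

lemma weightFn_aux (k : ℕ) : ∀ y m : ℕ, 1 ≤ m → m + k ≤ y + 1 →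
    weightFn (m + k) + weightFn y ≤ weightFn m + weightFn (y + k) := by
  induction k with
  | zero => intro y m _ _; simp
  | succ k ih =>
    intro y m hm hky
    have h1 := weightFn_step (m + k + 1) y (by omega) (by omega)
    have h2 := ih (y + 1) m hm (by omega)
    have e : m + k + 1 - 1 = m + k := by omega
    rw [e] at h1
    have e2 : y + 1 + k = y + (k + 1) := by omega
    rw [e2] at h2
    calc weightFn (m + (k+1)) + weightFn y = weightFn (m + k + 1) + weightFn y := by ring_nf
      _ ≤ weightFn (m + k) + weightFn (y + 1) := h1
      _ ≤ weightFn m + weightFn (y + (k+1)) := h2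

lemma weightFn_main (x y m : ℕ) (hm : 1 ≤ m) (hmx : m ≤ x) (hxy : x ≤ y) :
    weightFn x + weightFn y ≤ weightFn (x + y - m) + weightFn m := by
  have h := weightFn_aux (x - m) y m hm (by omega)
  have e1 : m + (x - m) = x := by omega
  have e2 : y + (x - m) = x + y - m := by omega
  rw [e1, e2] at h
  linarith

/-- If positive integers `x, y, z, m` satisfy `x + y = z`, `x ≥ m` and `y ≥ m`, then
`w x + w y ≤ w (z - m) + w m`. -/
theorem weightFn_add_le (x y z m : ℕ) (hx : 0 < x) (hy : 0 < y) (hz : 0 < z) (hm : 0 < m)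
    (hxyz : x + y = z) (hmx : m ≤ x) (hmy : m ≤ y) :
    weightFn x + weightFn y ≤ weightFn (z - m) + weightFn m := by
  subst hxyz
  rcases le_total x y with h | h
  · exact weightFn_main x y m hm hmx h
  · have := weightFn_main y x m hm hmy h
    have e : y + x - m = x + y - m := by omega
    rw [e] at this
    linarith
end
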